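/- arXiv:1503.06164 — 4 statements merged into one kernel-verified Lean document; each statement's English description precedes it below -/
import Mathlib

section
/- Let G be a finite abelian group with |G| ≥ 3 and let k be a positive integer. Then ρ_{2k}(G) = k·D(G), and 1 + k·D(G) ≤ ρ_{2k+1}(G) ≤ k·D(G) + ⌊D(G)/2⌋. In particular, if D(G) = 3, then ρ_{2k+1}(G) = 3k + 1. -/
/-- A minimal zero-sum sequence (atom) over `G`: a nontrivial multiset summing to zero,
no proper nontrivial sub-multiset of which sums to zero. -/
def MinZeroSum {G : Type*} [AddCommGroup G] (S : Multiset G) : Prop :=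
  S ≠ 0 ∧ S.sum = 0 ∧ ∀ T : Multiset G, T ≤ S → T ≠ 0 → T ≠ S → T.sum ≠ 0

/-- `rho G k` is the largest `m` such that some product of `k` atoms over `G`
equals a product of `m` atoms. -/
noncomputable def rho (G : Type*) [AddCommGroup G] (k : ℕ) : ℕ :=
  sSup {m : ℕ | ∃ (U : Fin k → Multiset G) (V : Fin m → Multiset G),
    (∀ i, MinZeroSum (U i)) ∧ (∀ j, MinZeroSum (V j)) ∧
    (∑ i, U i) = (∑ j, V j)}

/-- The Davenport constant of `G`: the maximal length of a minimal zero-sum sequence. -/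
noncomputable def DavC (G : Type*) [AddCommGroup G] : ℕ :=
  sSup {l : ℕ | ∃ S : Multiset G, MinZeroSum S ∧ Multiset.card S = l}

section Aux

variable {G : Type*} [AddCommGroup G]

lemma minZero_zero : MinZeroSum ({0} : Multiset G) := by
  refine ⟨by simp, by simp, ?_⟩
  intro T hT hT0 hTS
  have h1 : (1 : ℕ) ≤ Multiset.card T := by
    rwa [Nat.one_le_iff_ne_zero, Ne, Multiset.card_eq_zero]
  have : T = {0} := Multiset.eq_of_le_of_card_le hT (by simpa using h1)
  exact absurd this hTS

lemma MinZeroSum.eq_singleton_of_zero_mem {S : Multiset G} (h : MinZeroSum S)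
    (h0 : (0 : G) ∈ S) : S = {0} := by
  by_contra hne
  exact h.2.2 {0} (Multiset.singleton_le.mpr h0) (by simp) (fun he => hne he.symm) (by simp)

lemma MinZeroSum.eq_singleton_of_card_one {S : Multiset G} (h : MinZeroSum S)
    (hc : Multiset.card S = 1) : S = {0} := by
  obtain ⟨a, rfl⟩ := Multiset.card_eq_one.mp hc
  have : a = 0 := by simpa using h.2.1
  rw [this]

lemma MinZeroSum.card_pos {S : Multiset G} (h : MinZeroSum S) : 0 < Multiset.card S := by
  rw [Multiset.card_pos]
  exact h.1

lemma MinZeroSum.count_zero [DecidableEq G] {S : Multiset G} (h : MinZeroSum S) :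
    S.count 0 = if S = {0} then 1 else 0 := by
  split_ifs with hs
  · simp [hs]
  · rw [Multiset.count_eq_zero]
    intro h0
    exact hs (h.eq_singleton_of_zero_mem h0)

lemma minZero_pair {g : G} (hg : g ≠ 0) : MinZeroSum ({g, -g} : Multiset G) := by
  refine ⟨by simp, by simp, ?_⟩
  intro T hT hT0 hTS hsum
  have hc2 : Multiset.card T ≤ 2 := by simpa using Multiset.card_le_card hT
  have hc1 : 1 ≤ Multiset.card T := by
    rwa [Nat.one_le_iff_ne_zero, Ne, Multiset.card_eq_zero]
  have hc : Multiset.card T = 1 := by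
    rcases Nat.lt_or_ge (Multiset.card T) 2 with h | h
    · omega
    · exact absurd (Multiset.eq_of_le_of_card_le hT (by simpa using h)) hTS
  obtain ⟨a, rfl⟩ := Multiset.card_eq_one.mp hc
  have ha : a ∈ ({g, -g} : Multiset G) := Multiset.mem_of_le hT (by simp)
  have haz : a = 0 := by simpa using hsum
  rcases Multiset.mem_cons.mp ha with h | h
  · rw [h] at haz; exact hg haz
  · rw [Multiset.mem_singleton] at h
    rw [h] at haz
    exact hg (neg_eq_zero.mp haz)

lemma MinZeroSum.neg {S : Multiset G} (h : MinZeroSum S) :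
    MinZeroSum (S.map (fun x => -x)) := by
  obtain ⟨h0, hsum, hmin⟩ := h
  refine ⟨by simpa using h0, ?_, ?_⟩
  · rw [show (fun x : G => -x) = Neg.neg from rfl, Multiset.sum_map_neg']
    simp [hsum]
  · intro T hT hT0 hTS
    have hT' : T.map (fun x => -x) ≤ S := by
      have := Multiset.map_le_map (f := fun x : G => -x) hT
      simpa [Multiset.map_map, Function.comp] using this
    have hT'0 : T.map (fun x => -x) ≠ 0 := by simpa using hT0
    have hT'S : T.map (fun x => -x) ≠ S := by
      intro he
      apply hTS
      have := congrArg (Multiset.map (fun x : G => -x)) he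
      simpa [Multiset.map_map, Function.comp] using this
    have := hmin _ hT' hT'0 hT'S
    rw [show (fun x : G => -x) = Neg.neg from rfl, Multiset.sum_map_neg'] at this
    intro hz
    exact this (by simp [hz])

lemma davSet_bddAbove [Fintype G] :
    BddAbove {l : ℕ | ∃ S : Multiset G, MinZeroSum S ∧ Multiset.card S = l} := by
  refine ⟨Fintype.card G, ?_⟩
  rintro l ⟨S, hS, rfl⟩
  by_contra hlt
  push_neg at hlt
  obtain ⟨l, hl⟩ : ∃ l : List G, (l : Multiset G) = S := ⟨S.toList, Multiset.coe_toList S⟩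
  have hlen : Fintype.card G < l.length := by
    rwa [← hl, Multiset.coe_card] at hlt
  obtain ⟨i, j, hij, hfeq⟩ := Fintype.exists_ne_map_eq_of_card_lt
    (fun i : Fin l.length => (l.take i).sum) (by simpa using hlen)
  wlog hlt2 : (i : ℕ) < (j : ℕ) generalizing i j
  · refine this j i hij.symm hfeq.symm ?_
    rcases Fin.lt_or_lt_of_ne hij with h | h
    · omega
    · exact h
  set B : List G := (l.drop i).take (j - i) with hB
  have hsplit : l.take i ++ B = l.take j := by
    rw [hB, ← List.take_add]
    congr 1
    omega
  have hBsum : B.sum = 0 := by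
    have h1 : (l.take (i : ℕ)).sum + B.sum = (l.take (i : ℕ)).sum + 0 := by
      rw [add_zero, ← List.sum_append, hsplit, hfeq]
    exact add_left_cancel h1
  have hBlen : B.length = (j : ℕ) - (i : ℕ) := by
    rw [hB, List.length_take, List.length_drop]
    omega
  have hBle : (B : Multiset G) ≤ S := by
    rw [← hl, Multiset.coe_le]
    exact (List.IsInfix.sublist ((List.take_prefix _ _).isInfix.trans
      (List.drop_suffix (i : ℕ) l).isInfix)).subperm
  have hB0 : (B : Multiset G) ≠ 0 := by
    simp only [Ne, Multiset.coe_eq_zero]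
    intro he
    have := congrArg List.length he
    simp [hBlen] at this
    omega
  have hBS : (B : Multiset G) ≠ S := by
    intro he
    have := congrArg Multiset.card he
    rw [Multiset.coe_card, hBlen, ← hl, Multiset.coe_card] at this
    omega
  exact hS.2.2 _ hBle hB0 hBS (by simpa using hBsum)

lemma davSet_nonempty :
    {l : ℕ | ∃ S : Multiset G, MinZeroSum S ∧ Multiset.card S = l}.Nonempty :=
  ⟨1, {0}, minZero_zero, by simp⟩

lemma exists_max_atom [Fintype G] :
    ∃ W : Multiset G, MinZeroSum W ∧ Multiset.card W = DavC G :=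
  Nat.sSup_mem (davSet_nonempty (G := G)) (davSet_bddAbove (G := G))

lemma card_le_davC [Fintype G] {S : Multiset G} (hS : MinZeroSum S) :
    Multiset.card S ≤ DavC G :=
  le_csSup davSet_bddAbove ⟨S, hS, rfl⟩

lemma two_le_davC [Fintype G] (hG : 3 ≤ Fintype.card G) : 2 ≤ DavC G := by
  have : Nontrivial G := Fintype.one_lt_card_iff_nontrivial.mp (by omega)
  obtain ⟨g, hg⟩ := exists_ne (0 : G)
  exact le_csSup davSet_bddAbove ⟨{g, -g}, minZero_pair hg, by simp⟩

/-- `Good G K m`: `m` belongs to the defining set of `rho G K`. -/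
def Good (G : Type*) [AddCommGroup G] (K m : ℕ) : Prop :=
  ∃ (U : Fin K → Multiset G) (V : Fin m → Multiset G),
    (∀ i, MinZeroSum (U i)) ∧ (∀ j, MinZeroSum (V j)) ∧
    (∑ i, U i) = (∑ j, V j)

lemma rho_eq (K : ℕ) : rho G K = sSup {m | Good G K m} := rfl

lemma good_refl (K : ℕ) : Good G K K :=
  ⟨fun _ => {0}, fun _ => {0}, fun _ => minZero_zero, fun _ => minZero_zero, rfl⟩

lemma sum_fin_append {M : Type*} [AddCommMonoid M] {a b : ℕ}
    (u : Fin a → M) (v : Fin b → M) :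
    (∑ i, Fin.append u v i) = (∑ i, u i) + (∑ i, v i) := by
  rw [Fin.sum_univ_add]
  simp

lemma Good.add {K₁ m₁ K₂ m₂ : ℕ} (h₁ : Good G K₁ m₁) (h₂ : Good G K₂ m₂) :
    Good G (K₁ + K₂) (m₁ + m₂) := by
  obtain ⟨U₁, V₁, hU₁, hV₁, hE₁⟩ := h₁
  obtain ⟨U₂, V₂, hU₂, hV₂, hE₂⟩ := h₂
  refine ⟨Fin.append U₁ U₂, Fin.append V₁ V₂, ?_, ?_, ?_⟩
  · exact Fin.addCases (fun i => by simpa using hU₁ i) (fun i => by simpa using hU₂ i)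
  · exact Fin.addCases (fun i => by simpa using hV₁ i) (fun i => by simpa using hV₂ i)
  · rw [sum_fin_append, sum_fin_append, hE₁, hE₂]

omit [AddCommGroup G] in
lemma list_sum_singleton_get {H : Type*} [AddCommGroup H] (f : G → H) :
    ∀ l : List G, (∑ j : Fin l.length, ({f (l.get j)} : Multiset H)) = ↑(l.map f)
  | [] => by simp
  | a :: l => by
    rw [show (∑ j : Fin (a :: l).length, ({f ((a :: l).get j)} : Multiset H))
        = ∑ j : Fin (l.length + 1), ({f ((a :: l).get j)} : Multiset H) from rfl,
      Fin.sum_univ_succ]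
    have h2 : (∑ j : Fin l.length, ({f ((a :: l).get j.succ)} : Multiset H))
        = ∑ j : Fin l.length, ({f (l.get j)} : Multiset H) := by
      apply Finset.sum_congr rfl
      intro j _
      simp
    rw [h2, list_sum_singleton_get f l]
    simp [Multiset.singleton_add]

lemma good_two {W : Multiset G} (hW : MinZeroSum W) (h2 : 2 ≤ Multiset.card W) :
    Good G 2 (Multiset.card W) := by
  obtain ⟨l, hl⟩ : ∃ l : List G, (l : Multiset G) = W := ⟨W.toList, Multiset.coe_toList W⟩
  have hlen : l.length = Multiset.card W := by rw [← hl, Multiset.coe_card]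
  have h0 : (0 : G) ∉ W := by
    intro h0
    have := hW.eq_singleton_of_zero_mem h0
    rw [this] at h2
    simp at h2
  refine hlen ▸ ⟨![W, W.map (fun x => -x)],
    fun j : Fin l.length => {l.get j, -(l.get j)}, ?_, ?_, ?_⟩
  · intro i
    fin_cases i
    · exact hW
    · exact hW.neg
  · intro j
    apply minZero_pair
    intro hz
    apply h0
    rw [← hl]
    exact hz ▸ Multiset.mem_coe.mpr (List.get_mem l j)
  · rw [Fin.sum_univ_two]
    simp only [Matrix.cons_val_zero, Matrix.cons_val_one, Matrix.head_cons]
    have hsplit : (∑ j : Fin l.length, ({l.get j, -(l.get j)} : Multiset G))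
        = (∑ j : Fin l.length, (({l.get j} : Multiset G) + ({-(l.get j)} : Multiset G))) := by
      apply Finset.sum_congr rfl
      intro j _
      simp [Multiset.singleton_add]
    rw [hsplit, Finset.sum_add_distrib, list_sum_singleton_get (fun x => x) l,
      list_sum_singleton_get (fun x => -x) l]
    rw [List.map_id', hl]
    congr 1
    rw [← hl, Multiset.map_coe]

lemma good_even {W : Multiset G} (hW : MinZeroSum W) (h2 : 2 ≤ Multiset.card W) :
    ∀ k : ℕ, Good G (2 * k) (k * Multiset.card W)
  | 0 => by
    have h0 : Good G 0 0 := ⟨Fin.elim0, Fin.elim0, fun i => i.elim0, fun j => j.elim0, rfl⟩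
    simpa using h0
  | k + 1 => by
    have := (good_even hW h2 k).add (good_two hW h2)
    rwa [show 2 * k + 2 = 2 * (k + 1) by ring,
      show k * Multiset.card W + Multiset.card W = (k + 1) * Multiset.card W by ring] at this

lemma two_mul_le_mul_davC [Fintype G] (hG : 3 ≤ Fintype.card G) {K m : ℕ}
    (hm : Good G K m) : 2 * m ≤ K * DavC G := by
  classical
  obtain ⟨U, V, hU, hV, hE⟩ := hm
  have hD2 : 2 ≤ DavC G := two_le_davC hG
  set D := DavC G with hD
  set t : ℕ := ∑ j : Fin m, (if V j = {0} then 1 else 0) with ht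
  have hcount : ∀ {n : ℕ} (W : Fin n → Multiset G), (∀ i, MinZeroSum (W i)) →
      Multiset.count 0 (∑ i, W i) = ∑ i : Fin n, (if W i = {0} then 1 else 0) := by
    intro n W hW
    rw [Multiset.count_sum']
    exact Finset.sum_congr rfl fun i _ => (hW i).count_zero
  have htU : (∑ i : Fin K, (if U i = {0} then 1 else 0)) = t := by
    rw [ht, ← hcount U hU, ← hcount V hV, hE]
  -- lower bound on total length from the V side
  have hVlen : 2 * m ≤ (∑ j : Fin m, Multiset.card (V j)) + t := by
    have hpt : ∀ j : Fin m, 2 ≤ Multiset.card (V j) + (if V j = {0} then 1 else 0) := by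
      intro j
      split_ifs with h
      · simp [h]
      · have h1 : 1 ≤ Multiset.card (V j) := (hV j).card_pos
        rcases Nat.lt_or_ge (Multiset.card (V j)) 2 with hlt | hge
        · exact absurd ((hV j).eq_singleton_of_card_one (by omega)) h
        · omega
    calc 2 * m = ∑ _j : Fin m, 2 := by simp [mul_comm]
    _ ≤ ∑ j : Fin m, (Multiset.card (V j) + (if V j = {0} then 1 else 0)) :=
        Finset.sum_le_sum (fun j _ => hpt j)
    _ = (∑ j : Fin m, Multiset.card (V j)) + t := by rw [Finset.sum_add_distrib]
  -- upper bound on total length from the U side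
  have hUlen : (∑ i : Fin K, Multiset.card (U i)) + (D - 1) * t ≤ K * D := by
    have hpt : ∀ i : Fin K, Multiset.card (U i) + (D - 1) * (if U i = {0} then 1 else 0) ≤ D := by
      intro i
      split_ifs with h
      · simp only [h, Multiset.card_singleton, mul_one]
        omega
      · simpa using card_le_davC (hU i)
    calc (∑ i : Fin K, Multiset.card (U i)) + (D - 1) * t
        = ∑ i : Fin K, (Multiset.card (U i) + (D - 1) * (if U i = {0} then 1 else 0)) := by
          rw [Finset.sum_add_distrib, ← htU, Finset.mul_sum]
    _ ≤ ∑ _i : Fin K, D := Finset.sum_le_sum (fun i _ => hpt i)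
    _ = K * D := by simp [mul_comm]
  have hcardsum : ∀ {n : ℕ} (W : Fin n → Multiset G),
      Multiset.card (∑ i, W i) = ∑ i : Fin n, Multiset.card (W i) := by
    intro n W
    induction (Finset.univ : Finset (Fin n)) using Finset.induction with
    | empty => simp
    | insert a s h ih => simp [Finset.sum_insert h, ih]
  have hcards : (∑ i : Fin K, Multiset.card (U i)) = ∑ j : Fin m, Multiset.card (V j) := by
    rw [← hcardsum U, ← hcardsum V, hE]
  have ht' : t ≤ (D - 1) * t := Nat.le_mul_of_pos_left t (by omega)
  omega

lemma rhoSet_bddAbove [Fintype G] (hG : 3 ≤ Fintype.card G) (K : ℕ) :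
    BddAbove {m | Good G K m} := by
  refine ⟨K * DavC G, ?_⟩
  intro m hm
  have := two_mul_le_mul_davC hG (show Good G K m from hm)
  omega

end Aux

theorem stmt1 {G : Type*} [AddCommGroup G] [Fintype G]
    (hG : 3 ≤ Fintype.card G) (k : ℕ) (hk : 0 < k) :
    rho G (2 * k) = k * DavC G ∧
    1 + k * DavC G ≤ rho G (2 * k + 1) ∧
    rho G (2 * k + 1) ≤ k * DavC G + DavC G / 2 ∧
    (DavC G = 3 → rho G (2 * k + 1) = 3 * k + 1) := by
  obtain ⟨W, hW, hWcard⟩ := exists_max_atom (G := G)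
  have hD2 : 2 ≤ DavC G := two_le_davC hG
  set D := DavC G with hD
  have h2W : 2 ≤ Multiset.card W := by omega
  -- even part
  have heven_le : rho G (2 * k) ≤ k * D := by
    rw [rho_eq]
    have hne : {m | Good G (2 * k) m}.Nonempty := ⟨2 * k, good_refl (2 * k)⟩
    apply csSup_le hne
    intro m hm
    have h2m : 2 * m ≤ 2 * k * D := two_mul_le_mul_davC hG hm
    rw [mul_assoc] at h2m
    omega
  have heven_ge : k * D ≤ rho G (2 * k) := by
    rw [rho_eq]
    apply le_csSup (rhoSet_bddAbove hG _)
    have := good_even hW h2W k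
    rwa [hWcard] at this
  -- odd lower bound
  have hodd_ge : 1 + k * D ≤ rho G (2 * k + 1) := by
    rw [rho_eq]
    apply le_csSup (rhoSet_bddAbove hG _)
    have h1 : Good G 1 1 := good_refl 1
    have h := (good_even hW h2W k).add h1
    rw [hWcard] at h
    show Good G (2 * k + 1) (1 + k * D)
    rwa [show 1 + k * D = k * D + 1 by ring]
  -- odd upper bound
  have hodd_le : rho G (2 * k + 1) ≤ k * D + D / 2 := by
    rw [rho_eq]
    have hne : {m | Good G (2 * k + 1) m}.Nonempty := ⟨2 * k + 1, good_refl (2 * k + 1)⟩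
    apply csSup_le hne
    intro m hm
    have h2m : 2 * m ≤ (2 * k + 1) * D := two_mul_le_mul_davC hG hm
    have hle : m ≤ ((2 * k + 1) * D) / 2 := (Nat.le_div_iff_mul_le (by norm_num)).mpr (by omega)
    have heq : ((2 * k + 1) * D) / 2 = k * D + D / 2 := by
      rw [show (2 * k + 1) * D = D + 2 * (k * D) by ring,
        Nat.add_mul_div_left _ _ (by norm_num : 0 < 2)]
      omega
    omega
  refine ⟨le_antisymm heven_le heven_ge, hodd_ge, hodd_le, ?_⟩
  intro hD3
  rw [hD3] at hodd_ge hodd_le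
  omega
end

section
/- Let G be a finite abelian group with D(G) ≥ 4. The following are equivalent: (a) there exists a positive integer k* such that ρ_{2k*+1}(G) = k*·D(G) + ⌊D(G)/2⌋; (b) there exists a positive integer k* such that ρ_{2k+1}(G) = k·D(G) + ⌊D(G)/2⌋ for every k ≥ k*. -/
namespace RhoAux
variable {G : Type*} [AddCommGroup G]

lemma atom_zero_mem {S : Multiset G} (h : MinZeroSum S) (h0 : (0:G) ∈ S) : S = {0} := by
  by_contra hne
  exact h.2.2 {0} (Multiset.singleton_le.mpr h0) (by simp) (Ne.symm hne) (by simp)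

lemma atom_card_le [Fintype G] {S : Multiset G} (h : MinZeroSum S) :
    Multiset.card S ≤ Fintype.card G := by
  by_contra hc
  push_neg at hc
  set l := S.toList with hl
  have hlS : (l : Multiset G) = S := Multiset.coe_toList S
  have hlen : l.length = Multiset.card S := by rw [← hlS]; simp
  set n := l.length with hn
  have hcard : Fintype.card G < Fintype.card (Fin n) := by
    simpa [hlen] using hc
  obtain ⟨i, j, hij, hfij⟩ := Fintype.exists_ne_map_eq_of_card_lt
    (fun i : Fin n => (l.take i).sum) hcard
  wlog hlt : (i:ℕ) < (j:ℕ) generalizing i j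
  · exact this j i hij.symm hfij.symm (by omega)
  set T : Multiset G := (((l.drop i).take ((j:ℕ) - i) : List G) : Multiset G)
  have hsub : ((l.drop i).take ((j:ℕ) - i)).Sublist l := by
    exact ((List.take_prefix _ _).sublist).trans (List.drop_suffix _ _).sublist
  have hTle : T ≤ S := by
    rw [← hlS]
    exact (hsub.subperm : _)
  have hTcard : Multiset.card T = (j:ℕ) - i := by
    simp only [T, Multiset.coe_card, List.length_take, List.length_drop]
    omega
  have hTne : T ≠ 0 := by
    intro h0
    rw [h0] at hTcard
    simp at hTcard
    omega
  have hTneS : T ≠ S := by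
    intro hEq
    rw [hEq, ← hlen] at hTcard
    omega
  have hsumT : T.sum = 0 := by
    have htake : l.take (j:ℕ) = l.take (i:ℕ) ++ (l.drop i).take ((j:ℕ) - i) := by
      have : (j:ℕ) = i + ((j:ℕ) - i) := by omega
      rw [this, List.take_add]
      congr 2
      omega
    have : (l.take (j:ℕ)).sum = (l.take (i:ℕ)).sum + ((l.drop i).take ((j:ℕ) - i)).sum := by
      rw [htake, List.sum_append]
    have hsum : ((l.drop i).take ((j:ℕ) - i)).sum = 0 := by
      rw [← hfij] at this
      exact (left_eq_add.mp this)
    simpa [T] using hsum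
  exact h.2.2 T hTle hTne hTneS hsumT



lemma atom_neg {S : Multiset G} (h : MinZeroSum S) :
    MinZeroSum (S.map (fun x => -x)) := by
  obtain ⟨hne, hsum, hmin⟩ := h
  refine ⟨by simpa using hne, by simp [Multiset.sum_map_neg', hsum], ?_⟩
  intro T hT hT0 hTS hTsum
  have hT' : T.map (fun x => -x) ≤ S := by
    have := Multiset.map_le_map (f := fun x : G => -x) hT
    simpa [Multiset.map_map, Function.comp] using this
  refine hmin (T.map (fun x => -x)) hT' (by simpa using hT0) ?_ (by simp [Multiset.sum_map_neg', hTsum])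
  intro hEq
  apply hTS
  have := congrArg (Multiset.map (fun x : G => -x)) hEq
  simpa [Multiset.map_map, Function.comp] using this

lemma atom_pair {g : G} (hg : g ≠ 0) : MinZeroSum {g, -g} := by
  refine ⟨by simp, by simp, ?_⟩
  intro T hT hT0 hTS
  have hcard : Multiset.card T ≤ 2 := by
    simpa using Multiset.card_le_card hT
  have hc0 : Multiset.card T ≠ 0 := by simpa [Multiset.card_eq_zero] using hT0
  have hc2 : Multiset.card T ≠ 2 := by
    intro h2
    exact hTS (Multiset.eq_of_le_of_card_le hT (by simp [h2]))
  have hc1 : Multiset.card T = 1 := by omega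
  obtain ⟨x, rfl⟩ := Multiset.card_eq_one.mp hc1
  have hx : x ∈ ({g, -g} : Multiset G) := Multiset.mem_of_le hT (by simp)
  simp only [Multiset.insert_eq_cons, Multiset.mem_cons, Multiset.mem_singleton] at hx
  rcases hx with rfl | rfl
  · simpa using hg
  · simpa using hg

lemma pairs_exists (l : List G) (hl : ∀ g ∈ l, g ≠ 0) :
    ∃ P : Fin l.length → Multiset G, (∀ i, MinZeroSum (P i)) ∧
      (∑ i, P i) = (l : Multiset G) + (l : Multiset G).map (fun x => -x) := by
  induction l with
  | nil => exact ⟨Fin.elim0, fun i => i.elim0, by simp⟩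
  | cons g l ih =>
    obtain ⟨P, hP, hPsum⟩ := ih (fun x hx => hl x (List.mem_cons_of_mem _ hx))
    refine ⟨Fin.cons {g, -g} P, ?_, ?_⟩
    · intro i
      refine Fin.cases ?_ ?_ i
      · exact atom_pair (hl g List.mem_cons_self)
      · intro j; simpa using hP j
    · simp only [List.length_cons]
      rw [Fin.sum_cons, hPsum]
      simp only [Multiset.insert_eq_cons, ← Multiset.cons_coe, Multiset.map_cons, Multiset.map_add, Multiset.map_singleton,
        ← Multiset.singleton_add]
      rw [add_add_add_comm]


variable {G : Type*} [AddCommGroup G]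

def rhoSet (G : Type*) [AddCommGroup G] (k : ℕ) : Set ℕ :=
  {m : ℕ | ∃ (U : Fin k → Multiset G) (V : Fin m → Multiset G),
    (∀ i, MinZeroSum (U i)) ∧ (∀ j, MinZeroSum (V j)) ∧
    (∑ i, U i) = (∑ j, V j)}

lemma rho_def (k : ℕ) : rho G k = sSup (rhoSet G k) := rfl

def davSet (G : Type*) [AddCommGroup G] : Set ℕ :=
  {l : ℕ | ∃ S : Multiset G, MinZeroSum S ∧ Multiset.card S = l}

lemma dav_def : DavC G = sSup (davSet G) := rfl

variable [Fintype G]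

lemma dav_bdd : BddAbove (davSet G) :=
  ⟨Fintype.card G, fun _ ⟨_, hS, hc⟩ => hc ▸ atom_card_le hS⟩

lemma card_le_dav {S : Multiset G} (h : MinZeroSum S) : Multiset.card S ≤ DavC G :=
  le_csSup dav_bdd ⟨S, h, rfl⟩

lemma exists_max_atom (hD : 1 ≤ DavC G) :
    ∃ W : Multiset G, MinZeroSum W ∧ Multiset.card W = DavC G := by
  have hne : (davSet G).Nonempty := by
    by_contra h
    rw [Set.not_nonempty_iff_eq_empty] at h
    rw [dav_def, h] at hD
    simp at hD
  have := Nat.sSup_mem hne dav_bdd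
  obtain ⟨W, hW, hc⟩ := this
  exact ⟨W, hW, hc⟩

lemma count_zero_sum [DecidableEq G] {n : ℕ} (W : Fin n → Multiset G) (hW : ∀ i, MinZeroSum (W i))
    (p : Fin n → Prop) [DecidablePred p] (hp : ∀ i, p i ↔ W i = ({0} : Multiset G)) :
    Multiset.count 0 (∑ i, W i) = (Finset.univ.filter p).card := by
  classical
  rw [Multiset.count_sum', Finset.card_filter]
  refine Finset.sum_congr rfl (fun i _ => ?_)
  by_cases h : W i = ({0} : Multiset G)
  · simp [h, (hp i).mpr h]
  · have h0 : (0:G) ∉ W i := fun hmem => h (atom_zero_mem (hW i) hmem)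
    have : ¬ p i := fun hpi => h ((hp i).mp hpi)
    simp [Multiset.count_eq_zero.mpr h0, this]

lemma mem_bound (hD2 : 2 ≤ DavC G) {k m : ℕ} (hm : m ∈ rhoSet G (2*k+1)) :
    m ≤ k * DavC G + DavC G / 2 := by
  classical
  obtain ⟨U, V, hU, hV, hUV⟩ := hm
  set D := DavC G with hD
  set p : Fin (2*k+1) → Prop := fun i => U i = ({0} : Multiset G) with hp
  set q : Fin m → Prop := fun j => V j = ({0} : Multiset G) with hq
  have hpi : ∀ i, p i ↔ U i = ({0} : Multiset G) := fun i => Iff.rfl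
  have hqj : ∀ j, q j ↔ V j = ({0} : Multiset G) := fun j => Iff.rfl
  have hab : (Finset.univ.filter p).card = (Finset.univ.filter q).card := by
    rw [← count_zero_sum U hU p hpi, ← count_zero_sum V hV q hqj, hUV]
  have hcc : ∑ i, Multiset.card (U i) = ∑ j, Multiset.card (V j) := by
    have h := congrArg Multiset.cardHom hUV
    rw [map_sum, map_sum] at h
    exact h
  have hsplitU : ∑ i ∈ Finset.univ.filter p, Multiset.card (U i)
      + ∑ i ∈ Finset.univ.filter (fun i => ¬ p i), Multiset.card (U i)
      = ∑ i, Multiset.card (U i) := Finset.sum_filter_add_sum_filter_not _ _ _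
  have hsplitV : ∑ j ∈ Finset.univ.filter q, Multiset.card (V j)
      + ∑ j ∈ Finset.univ.filter (fun j => ¬ q j), Multiset.card (V j)
      = ∑ j, Multiset.card (V j) := Finset.sum_filter_add_sum_filter_not _ _ _
  have hcardU : (Finset.univ.filter p).card
      + (Finset.univ.filter (fun i => ¬ p i)).card = 2*k+1 := by
    simpa using Finset.card_filter_add_card_filter_not
      (s := (Finset.univ : Finset (Fin (2*k+1)))) (p := p)
  have hcardV : (Finset.univ.filter q).card
      + (Finset.univ.filter (fun j => ¬ q j)).card = m := by
    simpa using Finset.card_filter_add_card_filter_not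
      (s := (Finset.univ : Finset (Fin m))) (p := q)
  have e1U : ∑ i ∈ Finset.univ.filter p, Multiset.card (U i)
      = (Finset.univ.filter p).card := by
    rw [Finset.card_eq_sum_ones]
    refine Finset.sum_congr rfl (fun i hi => ?_)
    rw [Finset.mem_filter] at hi
    have : U i = ({0} : Multiset G) := (hpi i).mp hi.2
    rw [this]; simp
  have e1V : ∑ j ∈ Finset.univ.filter q, Multiset.card (V j)
      = (Finset.univ.filter q).card := by
    rw [Finset.card_eq_sum_ones]
    refine Finset.sum_congr rfl (fun j hj => ?_)
    rw [Finset.mem_filter] at hj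
    have : V j = ({0} : Multiset G) := (hqj j).mp hj.2
    rw [this]; simp
  have e2U : ∑ i ∈ Finset.univ.filter (fun i => ¬ p i), Multiset.card (U i)
      ≤ (Finset.univ.filter (fun i => ¬ p i)).card * D := by
    simpa [smul_eq_mul] using Finset.sum_le_card_nsmul
      (Finset.univ.filter (fun i => ¬ p i)) (fun i => Multiset.card (U i)) D
      (fun i _ => card_le_dav (hU i))
  have hcard2 : ∀ j ∈ Finset.univ.filter (fun j => ¬ q j), 2 ≤ Multiset.card (V j) := by
    intro j hj
    rw [Finset.mem_filter] at hj
    have hVne : V j ≠ ({0} : Multiset G) := fun h => hj.2 ((hqj j).mpr h)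
    have h1' : Multiset.card (V j) ≠ 0 := by
      simpa [Multiset.card_eq_zero] using (hV j).1
    have h2' : Multiset.card (V j) ≠ 1 := by
      intro hc1
      obtain ⟨x, hx⟩ := Multiset.card_eq_one.mp hc1
      have hx0 : x = 0 := by
        have := (hV j).2.1
        rw [hx] at this; simpa using this
      exact hVne (by rw [hx, hx0])
    omega
  have e2V : (Finset.univ.filter (fun j => ¬ q j)).card * 2
      ≤ ∑ j ∈ Finset.univ.filter (fun j => ¬ q j), Multiset.card (V j) := by
    simpa [smul_eq_mul] using Finset.card_nsmul_le_sum
      (Finset.univ.filter (fun j => ¬ q j)) (fun j => Multiset.card (V j)) 2 hcard2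
  have h2a : 2 * (Finset.univ.filter p).card
      ≤ (Finset.univ.filter p).card * D :=
    (mul_comm 2 _) ▸ Nat.mul_le_mul_left _ hD2
  have hDsplit : (Finset.univ.filter p).card * D
      + (Finset.univ.filter (fun i => ¬ p i)).card * D = (2*k+1) * D := by
    rw [← add_mul, hcardU]
  have key2 : 2 * m ≤ (2*k+1) * D := by omega
  obtain ⟨N, hN⟩ : ∃ N, k * D = N := ⟨_, rfl⟩
  have hNd : (2*k+1) * D = 2 * N + D := by rw [← hN]; ring
  omega

lemma step (hD : 4 ≤ DavC G) {n m : ℕ} (hm : m ∈ rhoSet G n) :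
    m + DavC G ∈ rhoSet G (n + 2) := by
  classical
  obtain ⟨W, hW, hWc⟩ := exists_max_atom (G := G) (by omega)
  have hWnz : ∀ g ∈ W, g ≠ (0:G) := by
    intro g hg h0
    rw [h0] at hg
    have := atom_zero_mem hW hg
    rw [this] at hWc
    simp at hWc
    omega
  obtain ⟨U, V, hU, hV, hUV⟩ := hm
  set l := W.toList with hl
  have hlW : (l : Multiset G) = W := Multiset.coe_toList W
  have hlen : l.length = DavC G := by rw [← hWc, ← hlW]; simp
  obtain ⟨P, hP, hPsum⟩ := pairs_exists l (fun g hg => hWnz g (by rw [← hlW]; exact Multiset.mem_coe.mpr hg))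
  set P' : Fin (DavC G) → Multiset G := fun i => P (Fin.cast hlen.symm i) with hP'
  have hPsum' : ∑ i, P' i = W + W.map (fun x => -x) := by
    rw [← hlW, ← hPsum]
    exact Fin.sum_congr' P hlen.symm
  refine ⟨Fin.append U ![W, W.map (fun x => -x)], Fin.append V P', ?_, ?_, ?_⟩
  · intro i
    refine Fin.addCases (fun i => ?_) (fun j => ?_) i
    · rw [Fin.append_left]; exact hU i
    · rw [Fin.append_right]
      fin_cases j
      · simpa using hW
      · simpa using atom_neg hW
  · intro j
    refine Fin.addCases (fun j => ?_) (fun j => ?_) j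
    · rw [Fin.append_left]; exact hV j
    · rw [Fin.append_right]; exact hP _
  · rw [Fin.sum_univ_add, Fin.sum_univ_add]
    simp only [Fin.append_left, Fin.append_right]
    rw [hUV, hPsum']
    congr 1
    simp [Fin.sum_univ_two]

lemma self_mem (hD : 1 ≤ DavC G) (k : ℕ) : (k : ℕ) ∈ rhoSet G k := by
  obtain ⟨W, hW, _⟩ := exists_max_atom hD
  exact ⟨fun _ => W, fun _ => W, fun _ => hW, fun _ => hW, rfl⟩

end RhoAux

open RhoAux in
theorem stmt5 {G : Type*} [AddCommGroup G] [Fintype G]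
    (hD : 4 ≤ DavC G) :
    (∃ k : ℕ, 0 < k ∧ rho G (2 * k + 1) = k * DavC G + DavC G / 2) ↔
    (∃ k₀ : ℕ, 0 < k₀ ∧ ∀ k : ℕ, k₀ ≤ k →
        rho G (2 * k + 1) = k * DavC G + DavC G / 2) := by
  have hD2 : 2 ≤ DavC G := by omega
  have hD1 : 1 ≤ DavC G := by omega
  constructor
  · rintro ⟨k, hk, hval⟩
    refine ⟨k, hk, fun k' hk' => ?_⟩
    have hbdd : ∀ kk : ℕ, BddAbove (rhoSet G (2*kk+1)) :=
      fun kk => ⟨kk * DavC G + DavC G / 2, fun m hm => mem_bound hD2 hm⟩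
    have hne : ∀ kk : ℕ, (rhoSet G (2*kk+1)).Nonempty :=
      fun kk => ⟨2*kk+1, self_mem hD1 (2*kk+1)⟩
    -- the sup is attained at k
    have hmem0 : (k * DavC G + DavC G / 2) ∈ rhoSet G (2*k+1) := by
      have := Nat.sSup_mem (hne k) (hbdd k)
      rw [← rho_def] at this
      rw [show 2*k+1 = 2*k+1 from rfl] at this
      rwa [hval] at this
    -- build up
    have hmemd : ∀ d : ℕ, (k * DavC G + DavC G / 2 + d * DavC G) ∈ rhoSet G (2*(k+d)+1) := by
      intro d
      induction d with
      | zero => simpa using hmem0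
      | succ d ih =>
        have := step hD ih
        have heq : 2*(k+d)+1+2 = 2*(k+(d+1))+1 := by ring
        rw [heq] at this
        have heq2 : k * DavC G + DavC G / 2 + d * DavC G + DavC G
            = k * DavC G + DavC G / 2 + (d+1) * DavC G := by ring
        rwa [heq2] at this
    have hmem : (k' * DavC G + DavC G / 2) ∈ rhoSet G (2*k'+1) := by
      have := hmemd (k' - k)
      have e1 : k + (k' - k) = k' := by omega
      rw [e1] at this
      have e2 : k * DavC G + DavC G / 2 + (k' - k) * DavC G
          = k' * DavC G + DavC G / 2 := by
        have : k * DavC G + (k' - k) * DavC G = k' * DavC G := by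
          rw [← add_mul, e1]
        omega
      rwa [e2] at this
    refine le_antisymm ?_ ?_
    · rw [rho_def]
      exact csSup_le (hne k') (fun m hm => mem_bound hD2 hm)
    · rw [rho_def]
      exact le_csSup (hbdd k') hmem
  · rintro ⟨k₀, hk₀, hall⟩
    exact ⟨k₀, hk₀, hall k₀ le_rfl⟩
end

section
/- Let G be a finite abelian group which is the internal direct sum G = G_1 ⊕ G_2 of two nontrivial subgroups. For i = 1, 2, suppose there exist minimal zero-sum sequences V_{i,1}, V_{i,2}, V_{i,3} over G_i whose product V_{i,1}·V_{i,2}·V_{i,3} admits a factorization into ρ_i minimal zero-sum sequences all of length 2. Then there exist minimal zero-sum sequences U_1, U_2, U_3 over G whose product U_1·U_2·U_3 admits a factorization into ρ_1 + ρ_2 − 2 minimal zero-sum sequences, exactly one of which has length 3 (and contains exactly one term from each of U_1, U_2, U_3) while all the others have length 2. In particular, ρ_3(G) ≥ ρ_1 + ρ_2 − 2. -/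
/-- The product `U 0 + U 1 + U 2` of three sequences admits a factorization into `m`
minimal zero-sum sequences, of which exactly `r` have length `3` and contain exactly one
term from each `U i`, while all the others have length `2`.  The map `T` records,
for each atom of the factorization, its portion coming from each `U i`. -/
def TraversalFactorization {G : Type*} [AddCommGroup G]
    (U : Fin 3 → Multiset G) (m r : ℕ) : Prop :=
  ∃ (W : Fin m → Multiset G) (T : Fin m → Fin 3 → Multiset G) (J : Finset (Fin m)),
    (∀ j, MinZeroSum (W j)) ∧
    (∀ j, W j = T j 0 + T j 1 + T j 2) ∧
    (∀ i, U i = ∑ j, T j i) ∧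
    J.card = r ∧
    (∀ j ∈ J, Multiset.card (W j) = 3 ∧ ∀ i, Multiset.card (T j i) = 1) ∧
    (∀ j ∉ J, Multiset.card (W j) = 2)

namespace Stmt15
open Multiset

variable {G : Type*} [AddCommGroup G]

def pair (x : G) : Multiset G := {x, -x}

@[simp] lemma card_pair (x : G) : Multiset.card (pair x) = 2 := rfl

@[simp] lemma sum_pair (x : G) : (pair x).sum = 0 := by simp [pair]

lemma pair_neg (x : G) : pair (-x) = pair x := by
  show (-x) ::ₘ {-(-x)} = x ::ₘ {-x}
  rw [neg_neg]
  exact Multiset.cons_swap _ _ _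

lemma mem_pair {x y : G} : y ∈ pair x ↔ y = x ∨ y = -x := by
  simp [pair]

lemma eq_of_zs {A T : Multiset G} (hA : MinZeroSum A) (hle : T ≤ A) (h0 : T ≠ 0)
    (hs : T.sum = 0) : T = A := by
  by_contra h
  exact hA.2.2 T hle h0 h hs

section DEq
variable [DecidableEq G]

lemma count_pair (x y : G) :
    Multiset.count y (pair x) = (if y = x then 1 else 0) + (if y = -x then 1 else 0) := by
  simp only [pair, Multiset.insert_eq_cons, Multiset.count_cons, Multiset.count_singleton]
  split_ifs <;> omega

lemma mzs_of_card_sum (S : Multiset G) (hc : Multiset.card S ≤ 3) (hs : S.sum = 0)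
    (h0 : S ≠ 0) (hnz : ∀ x ∈ S, x ≠ 0) : MinZeroSum S := by
  refine ⟨h0, hs, ?_⟩
  intro T hle hT0 hTS hTsum
  have hst : T + (S - T) = S := add_tsub_cancel_of_le hle
  have hsum2 : (S - T).sum = 0 := by
    have h := congrArg Multiset.sum hst
    rw [Multiset.sum_add, hTsum, zero_add] at h
    rw [h, hs]
  have hT0' : S - T ≠ 0 := by
    intro h
    rw [h, add_zero] at hst
    exact hTS hst
  have hcard := congrArg Multiset.card hst
  rw [Multiset.card_add] at hcard
  have h1 : 1 ≤ Multiset.card T := Multiset.card_pos.mpr hT0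
  have h2 : 1 ≤ Multiset.card (S - T) := Multiset.card_pos.mpr hT0'
  have hone : Multiset.card T = 1 ∨ Multiset.card (S - T) = 1 := by omega
  rcases hone with h | h
  · obtain ⟨a, ha⟩ := Multiset.card_eq_one.mp h
    have : a ∈ S := Multiset.mem_of_le hle (by simp [ha])
    exact hnz a this (by simpa [ha] using hTsum)
  · obtain ⟨a, ha⟩ := Multiset.card_eq_one.mp h
    have : a ∈ S := Multiset.mem_of_le (tsub_le_self) (by rw [ha]; simp)
    exact hnz a this (by simpa [ha] using hsum2)

lemma mzs_pair {x : G} (hx : x ≠ 0) : MinZeroSum (pair x) := by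
  refine mzs_of_card_sum _ (by simp) (by simp) (by simp [pair]) ?_
  intro y hy
  rcases mem_pair.mp hy with rfl | rfl
  · exact hx
  · simpa using hx

lemma mzs_triple {g h k : G} (hs : g + h + k = 0) (hg : g ≠ 0) (hh : h ≠ 0) (hk : k ≠ 0) :
    MinZeroSum {g, h, k} := by
  refine mzs_of_card_sum _ (by simp) (by simp [← hs]; abel) (by simp) ?_
  intro y hy
  rcases by simpa using hy with rfl | rfl | rfl <;> assumption

end DEq

lemma mzs_card_two {S : Multiset G} (hS : MinZeroSum S) (hc : Multiset.card S = 2) :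
    ∃ x : G, x ≠ 0 ∧ S = pair x := by
  obtain ⟨x, y, hxy⟩ := Multiset.card_eq_two.mp hc
  have hsum : x + y = 0 := by simpa [hxy] using hS.2.1
  have hx : x ≠ 0 := by
    intro h
    refine hS.2.2 {x} ?_ (by simp) ?_ (by simp [h])
    · rw [hxy]
      exact Multiset.cons_le_cons _ (Multiset.zero_le _)
    · intro hh
      have := congrArg Multiset.card hh
      rw [hc] at this
      simp at this
  have hy : y = -x := (neg_eq_of_add_eq_zero_right hsum).symm
  exact ⟨x, hx, by rw [hxy, hy]; rfl⟩

lemma mzs_neg {S : Multiset G} (hS : MinZeroSum S) : MinZeroSum (S.map (fun z => -z)) := by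
  obtain ⟨h0, hs, hmin⟩ := hS
  refine ⟨by simpa using h0, by rw [Multiset.sum_map_neg', hs, neg_zero], ?_⟩
  intro T hle hT0 hTS hTsum
  have hTe : T = (T.map (fun z => -z)).map (fun z => -z) := by
    simp [Multiset.map_map, Function.comp]
  set T' := T.map (fun z => -z) with hT'
  have hle' : T' ≤ S := by
    have := Multiset.map_le_map (f := fun z : G => -z) hle
    simpa [Multiset.map_map, Function.comp] using this
  refine hmin T' hle' (by simpa [hT'] using hT0) ?_ (by rw [Multiset.sum_map_neg', hTsum, neg_zero])
  intro h
  apply hTS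
  rw [hTe, h]

lemma two_le_card {S : Multiset G} (hS : MinZeroSum S) (hnz : ∀ x ∈ S, x ≠ 0) :
    2 ≤ Multiset.card S := by
  by_contra h
  push_neg at h
  interval_cases hc : Multiset.card S
  · exact hS.1 (Multiset.card_eq_zero.mp hc)
  · obtain ⟨a, ha⟩ := Multiset.card_eq_one.mp hc
    exact hnz a (by simp [ha]) (by simpa [ha] using hS.2.1)


/-- sum of pairs over a list -/
def psum (l : List G) : Multiset G := (l.map pair).sum

@[simp] lemma psum_nil : psum ([] : List G) = 0 := rfl

@[simp] lemma psum_cons (w : G) (l : List G) : psum (w :: l) = pair w + psum l := by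
  simp [psum]

lemma card_psum (l : List G) : Multiset.card (psum l) = 2 * l.length := by
  induction l with
  | nil => simp
  | cons w l ih => simp [ih]; ring

section DEq
variable [DecidableEq G]

lemma count_psum (l : List G) (x : G) :
    Multiset.count x (psum l) = Multiset.count x (l : Multiset G) + Multiset.count (-x) (l : Multiset G) := by
  induction l with
  | nil => simp
  | cons w l ih =>
    have hcoe : ((w :: l : List G) : Multiset G) = w ::ₘ (l : Multiset G) := rfl
    rw [psum_cons, Multiset.count_add, ih, count_pair, hcoe,
      Multiset.count_cons, Multiset.count_cons]
    have h1 : (x = w) ↔ (-x = -w) := by constructor <;> intro h <;> simpa using congrArg Neg.neg h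
    have h2 : (x = -w) ↔ (-x = w) := by
      constructor <;> intro h
      · rw [h, neg_neg]
      · rw [← h, neg_neg]
    split_ifs with a b c d <;> first
      | omega
      | (exfalso; omega)
      | (exfalso; first | exact (by tauto : False) | omega)
      | skip
    all_goals (simp_all; omega)

lemma count_psum_symm (l : List G) (x : G) :
    Multiset.count x (psum l) = Multiset.count (-x) (psum l) := by
  rw [count_psum, count_psum, neg_neg]
  omega

lemma count_psum_even (l : List G) (x : G) (hx : x = -x) :
    2 ∣ Multiset.count x (psum l) := by
  rw [count_psum, ← hx]
  omega

lemma zero_not_mem_psum (l : List G) (h0 : ∀ x ∈ l, x ≠ 0) : (0 : G) ∉ psum l := by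
  intro h
  rw [← Multiset.count_pos, count_psum, neg_zero] at h
  have : (0:G) ∈ (l : Multiset G) := by
    rw [← Multiset.count_pos]; omega
  exact h0 0 (by simpa using this) rfl

lemma psum_congr {l₁ l₂ : List G} (h : (l₁ : Multiset G) = (l₂ : Multiset G)) :
    psum l₁ = psum l₂ := by
  ext x
  rw [count_psum, count_psum, h]

/-- removing a full pair from a pair-sum -/
lemma psum_remove (l₀ : List G) (h0 : ∀ x ∈ l₀, x ≠ 0) (α : G)
    (hle : pair α ≤ psum l₀) :
    ∃ l : List G, l.length + 1 = l₀.length ∧ (∀ x ∈ l, x ≠ 0) ∧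
      psum l₀ = pair α + psum l := by
  induction l₀ with
  | nil =>
    exfalso
    have := Multiset.card_le_card hle
    simp at this
  | cons w l₀ ih =>
    by_cases hc : α = w ∨ α = -w
    · refine ⟨l₀, by simp, fun x hx => h0 x (by simp [hx]), ?_⟩
      have hp : pair α = pair w := by
        rcases hc with rfl | rfl
        · rfl
        · exact pair_neg w
      rw [psum_cons, hp]
    · push_neg at hc
      have hle' : pair α ≤ psum l₀ := by
        rw [Multiset.le_iff_count]
        intro x
        have h := (Multiset.le_iff_count.mp hle) x
        rw [psum_cons, Multiset.count_add] at h
        by_cases hx : Multiset.count x (pair α) = 0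
        · omega
        · have hxor : x = α ∨ x = -α := by
            rw [count_pair] at hx
            split_ifs at hx <;> tauto
          have hw : Multiset.count x (pair w) = 0 := by
            rcases hxor with rfl | rfl
            · rw [count_pair]
              simp [hc.1, hc.2]
            · have n1 : -α ≠ w := fun hh => hc.2 (by rw [← hh]; simp)
              have n2 : -α ≠ -w := fun hh => hc.1 (by simpa using congrArg Neg.neg hh)
              rw [count_pair]
              simp [n1, n2]
          omega
      obtain ⟨l, hl1, hl2, hl3⟩ := ih (fun x hx => h0 x (by simp [hx])) hle'
      exact ⟨w :: l, by simp [← hl1], by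
        intro x hx
        rcases List.mem_cons.mp hx with rfl | hx
        · exact h0 x (by simp)
        · exact hl2 x hx, by rw [psum_cons, psum_cons, hl3, add_left_comm]⟩

/-- S + (-S) as a pair-sum over S.toList -/
lemma self_add_neg_eq_psum (S : Multiset G) :
    S + S.map (fun z => -z) = psum S.toList := by
  ext x
  rw [Multiset.count_add, count_psum, Multiset.coe_toList,
    Multiset.count_map_eq_count' (fun z : G => -z) S neg_injective (-x) |>.symm]
  simp

end DEq

section DEq2
variable [DecidableEq G]

lemma decompose_le_add {T s t : Multiset G} (h : T ≤ s + t) :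
    ∃ u v, u ≤ s ∧ v ≤ t ∧ T = u + v := by
  refine ⟨T ∩ s, T - T ∩ s, Multiset.inter_le_right, ?_, (add_tsub_cancel_of_le Multiset.inter_le_left).symm⟩
  rw [Multiset.le_iff_count]
  intro x
  have h1 := (Multiset.le_iff_count.mp h) x
  rw [Multiset.count_add] at h1
  rw [Multiset.count_sub, Multiset.count_inter]
  omega

/-- The merge of two atoms supported on complementary subgroups. -/
lemma merge_atom (H₁ H₂ : AddSubgroup G) (hdis : ∀ x : G, x ∈ H₁ → x ∈ H₂ → x = 0)
    {A B : Multiset G} (hA : MinZeroSum A) (hB : MinZeroSum B)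
    (hAmem : ∀ x ∈ A, x ∈ H₁) (hBmem : ∀ x ∈ B, x ∈ H₂)
    {a b : G} (ha : a ∈ A) (hb : b ∈ B) :
    MinZeroSum ((A.erase a) + (B.erase b) + {a + b}) := by
  have hAsum : (A.erase a).sum = -a := by
    have h2 := congrArg Multiset.sum (Multiset.cons_erase ha)
    rw [Multiset.sum_cons, hA.2.1] at h2
    exact (neg_eq_of_add_eq_zero_right h2).symm
  have hBsum : (B.erase b).sum = -b := by
    have h2 := congrArg Multiset.sum (Multiset.cons_erase hb)
    rw [Multiset.sum_cons, hB.2.1] at h2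
    exact (neg_eq_of_add_eq_zero_right h2).symm
  have hzero : ∀ x y : G, x ∈ H₁ → y ∈ H₂ → x + y = 0 → x = 0 ∧ y = 0 := by
    intro x y hx hy hxy
    have hyx : x = -y := eq_neg_of_add_eq_zero_left hxy
    have : x ∈ H₂ := hyx ▸ neg_mem hy
    have hx0 : x = 0 := hdis x hx this
    exact ⟨hx0, by rw [hx0, zero_add] at hxy; exact hxy⟩
  refine ⟨by simp, by rw [Multiset.sum_add, Multiset.sum_add, hAsum, hBsum]; simp; abel, ?_⟩
  intro T hle hT0 hTS hTsum
  obtain ⟨T12, T3, hT12, hT3, hTeq⟩ := decompose_le_add hle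
  obtain ⟨T1, T2, hT1, hT2, hT12eq⟩ := decompose_le_add hT12
  have hT1A : T1 ≤ A := le_trans hT1 (Multiset.erase_le a A)
  have hT2B : T2 ≤ B := le_trans hT2 (Multiset.erase_le b B)
  have hT1mem : T1.sum ∈ H₁ := AddSubgroup.multiset_sum_mem _ _
    (fun x hx => hAmem x (Multiset.mem_of_le hT1A hx))
  have hT2mem : T2.sum ∈ H₂ := AddSubgroup.multiset_sum_mem _ _
    (fun x hx => hBmem x (Multiset.mem_of_le hT2B hx))
  have haH : a ∈ H₁ := hAmem a ha
  have hbH : b ∈ H₂ := hBmem b hb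
  have hT1ne : T1 ≠ A := by
    intro h
    have h1 := (Multiset.le_iff_count.mp hT1) a
    rw [h, Multiset.count_erase_self] at h1
    have := Multiset.count_pos.mpr ha
    omega
  have hT2ne : T2 ≠ B := by
    intro h
    have h1 := (Multiset.le_iff_count.mp hT2) b
    rw [h, Multiset.count_erase_self] at h1
    have := Multiset.count_pos.mpr hb
    omega
  rcases Multiset.le_singleton.mp hT3 with h3 | h3
  · -- T3 = 0
    rw [hTeq, hT12eq, h3, add_zero, Multiset.sum_add] at hTsum
    obtain ⟨e1, e2⟩ := hzero _ _ hT1mem hT2mem hTsum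
    have hT1z : T1 = 0 := by
      by_contra h
      exact hA.2.2 T1 hT1A h hT1ne e1
    have hT2z : T2 = 0 := by
      by_contra h
      exact hB.2.2 T2 hT2B h hT2ne e2
    rw [hTeq, hT12eq, hT1z, hT2z, h3] at hT0
    simp at hT0
  · -- T3 = {a+b}
    rw [hTeq, hT12eq, h3, Multiset.sum_add, Multiset.sum_add, Multiset.sum_singleton] at hTsum
    have hsum' : (T1.sum + a) + (T2.sum + b) = 0 := by rw [← hTsum]; abel
    obtain ⟨e1, e2⟩ := hzero _ _ (AddSubgroup.add_mem _ hT1mem haH)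
      (AddSubgroup.add_mem _ hT2mem hbH) hsum'
    have hc1 : a ::ₘ T1 = A := by
      apply eq_of_zs hA
      · rw [← Multiset.cons_erase ha]
        exact Multiset.cons_le_cons _ hT1
      · simp
      · rw [Multiset.sum_cons]
        rw [add_comm] at e1
        exact e1
    have hc2 : b ::ₘ T2 = B := by
      apply eq_of_zs hB
      · rw [← Multiset.cons_erase hb]
        exact Multiset.cons_le_cons _ hT2
      · simp
      · rw [Multiset.sum_cons]
        rw [add_comm] at e2
        exact e2
    have hT1e : T1 = A.erase a := by
      have := Multiset.cons_erase ha
      rw [← this] at hc1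
      exact (Multiset.cons_inj_right _).mp hc1
    have hT2e : T2 = B.erase b := by
      have := Multiset.cons_erase hb
      rw [← this] at hc2
      exact (Multiset.cons_inj_right _).mp hc2
    exact hTS (by rw [hTeq, hT12eq, h3, hT1e, hT2e])

end DEq2

section DEq3
variable [DecidableEq G]

/-- refinement: a multiset written both as P+Q+R and as a sum of a list of multisets -/
lemma split3 (c : List (Multiset G)) :
    ∀ P Q R : Multiset G, P + Q + R = c.sum →
    ∃ t : List (Multiset G × Multiset G × Multiset G),
      t.length = c.length ∧
      (∀ q ∈ t, q.1 + q.2.1 + q.2.2 ∈ c) ∧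
      (t.map (fun q => q.1)).sum = P ∧
      (t.map (fun q => q.2.1)).sum = Q ∧
      (t.map (fun q => q.2.2)).sum = R := by
  induction c with
  | nil =>
    intro P Q R h
    rw [List.sum_nil] at h
    have hP : P = 0 := by
      ext x
      have := congrArg (Multiset.count x) h
      simp only [Multiset.count_add, Multiset.count_zero] at this
      rw [Multiset.count_zero]
      omega
    have hQ : Q = 0 := by
      ext x
      have := congrArg (Multiset.count x) h
      simp only [Multiset.count_add, Multiset.count_zero] at this
      rw [Multiset.count_zero]
      omega
    have hR : R = 0 := by
      ext x
      have := congrArg (Multiset.count x) h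
      simp only [Multiset.count_add, Multiset.count_zero] at this
      rw [Multiset.count_zero]
      omega
    exact ⟨[], by simp, by simp, by simp [hP], by simp [hQ], by simp [hR]⟩
  | cons m c ih =>
    intro P Q R h
    set p := m ∩ P with hp
    set q := (m - p) ∩ Q with hq
    set r := m - p - q with hr
    have hpP : p ≤ P := Multiset.inter_le_right
    have hqQ : q ≤ Q := Multiset.inter_le_right
    have hcount : ∀ x, Multiset.count x P + Multiset.count x Q + Multiset.count x R
        = Multiset.count x m + Multiset.count x c.sum := by
      intro x
      have := congrArg (Multiset.count x) h
      simpa [Multiset.count_add] using this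
    have cp : ∀ x, Multiset.count x p = min (Multiset.count x m) (Multiset.count x P) := by
      intro x; rw [hp, Multiset.count_inter]
    have cq : ∀ x, Multiset.count x q
        = min (Multiset.count x m - Multiset.count x p) (Multiset.count x Q) := by
      intro x; rw [hq, Multiset.count_inter, Multiset.count_sub]
    have cr : ∀ x, Multiset.count x r
        = Multiset.count x m - Multiset.count x p - Multiset.count x q := by
      intro x; rw [hr, Multiset.count_sub, Multiset.count_sub]
    have hrR : r ≤ R := by
      rw [Multiset.le_iff_count]
      intro x
      have h1 := hcount x
      have := cp x; have := cq x; have := cr x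
      omega
    have hm : p + q + r = m := by
      ext x
      rw [Multiset.count_add, Multiset.count_add]
      have := cp x; have := cq x; have := cr x
      omega
    have hrec : (P - p) + (Q - q) + (R - r) = c.sum := by
      ext x
      have h1 := hcount x
      have h2 : Multiset.count x p ≤ Multiset.count x P := Multiset.le_iff_count.mp hpP x
      have h3 : Multiset.count x q ≤ Multiset.count x Q := Multiset.le_iff_count.mp hqQ x
      have h4 : Multiset.count x r ≤ Multiset.count x R := Multiset.le_iff_count.mp hrR x
      have h5 : Multiset.count x p + Multiset.count x q + Multiset.count x r = Multiset.count x m := by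
        have := congrArg (Multiset.count x) hm
        simpa [Multiset.count_add] using this
      rw [Multiset.count_add, Multiset.count_add, Multiset.count_sub, Multiset.count_sub,
        Multiset.count_sub]
      omega
    obtain ⟨t, ht1, ht2, ht3, ht4, ht5⟩ := ih _ _ _ hrec
    refine ⟨(p, q, r) :: t, by simp [ht1], ?_, ?_, ?_, ?_⟩
    · intro x hx
      rcases List.mem_cons.mp hx with rfl | hx
      · simp [hm]
      · exact List.mem_cons_of_mem _ (ht2 x hx)
    · simp only [List.map_cons, List.sum_cons, ht3]
      exact add_tsub_cancel_of_le hpP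
    · simp only [List.map_cons, List.sum_cons, ht4]
      exact add_tsub_cancel_of_le hqQ
    · simp only [List.map_cons, List.sum_cons, ht5]
      exact add_tsub_cancel_of_le hrR

end DEq3

lemma fin_sum_list {α : Type*} (L : List α) (f : α → Multiset G) (m : ℕ) (hm : m = L.length) :
    ∑ j : Fin m, f (L.get (Fin.cast hm j)) = (L.map f).sum := by
  subst hm
  rw [← List.sum_ofFn]
  congr 1
  conv_rhs => rw [← List.ofFn_get L, List.map_ofFn]
  rfl

/-- Davenport-type bound : an atom has length at most |G| -/
lemma mzs_card_le [Fintype G] {S : Multiset G} (hS : MinZeroSum S) :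
    Multiset.card S ≤ Fintype.card G := by
  classical
  by_contra h
  push_neg at h
  set L := S.toList with hL
  have hlen : L.length = Multiset.card S := by simp [hL]
  set n := Multiset.card S with hn
  have key : ∀ i j : ℕ, i < j → j < n →
      (L.take i).sum = (L.take j).sum → False := by
    intro i j hlt hjn hpeq
    set T : Multiset G := (((L.drop i).take (j - i) : List G) : Multiset G) with hT
    have hsub : ((L.drop i).take (j - i)).Sublist L :=
      ((L.drop i).take_sublist _).trans (L.drop_sublist _)
    have hTle : T ≤ S := by
      have : S = (L : Multiset G) := (Multiset.coe_toList S).symm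
      rw [this, hT]
      exact Multiset.coe_le.mpr hsub.subperm
    have hlen2 : ((L.drop i).take (j - i)).length = j - i := by
      rw [List.length_take, List.length_drop, hlen]
      omega
    have hsplit : L.take j = L.take i ++ (L.drop i).take (j - i) := by
      have h2 : i + (j - i) = j := by omega
      rw [← h2, List.take_add]
      have h3 : i + (j - i) - i = j - i := by omega
      rw [h3]
    have hTsum : T.sum = 0 := by
      have heq := congrArg List.sum hsplit
      rw [List.sum_append, ← hpeq] at heq
      have h2 : (((L.drop i).take (j - i)) : List G).sum = 0 :=
        left_eq_add.mp heq
      simpa [hT] using h2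
    have hT0 : T ≠ 0 := by
      intro hh
      have := congrArg Multiset.card hh
      simp [hT, hlen2] at this
      omega
    have hTS : T ≠ S := by
      intro hh
      have := congrArg Multiset.card hh
      rw [hT] at this
      simp only [Multiset.coe_card, hlen2] at this
      omega
    exact hS.2.2 T hTle hT0 hTS hTsum
  have hcard : Fintype.card G < Fintype.card (Fin n) := by simpa using h
  obtain ⟨i, j, hij, hpeq⟩ := Fintype.exists_ne_map_eq_of_card_lt
    (fun i : Fin n => ((L.take i.val).sum : G)) hcard
  rcases Nat.lt_or_ge i.val j.val with hlt | hge
  · exact key i.val j.val hlt j.isLt hpeq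
  · have : j.val < i.val := by
      rcases Nat.lt_or_ge j.val i.val with h' | h'
      · exact h'
      · exact absurd (Fin.ext (by omega)) hij
    exact key j.val i.val this i.isLt hpeq.symm

/-- target configuration extracted from one side -/
def Concl (H : AddSubgroup G) (n : ℕ) : Prop :=
  ∃ (X Y Z : Multiset G) (u v : G) (l : List G),
    MinZeroSum X ∧ MinZeroSum Y ∧ MinZeroSum Z ∧
    (∀ x ∈ X + Y + Z, x ∈ H ∧ x ≠ 0) ∧
    ({u, v} : Multiset G) ≤ X ∧ -u ∈ Y ∧ -v ∈ Z ∧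
    X + Y + Z = pair u + pair v + psum l ∧
    l.length + 2 = n ∧ (∀ x ∈ l, x ≠ 0)

section Side
variable [DecidableEq G]

lemma count_pair' (u v x : G) :
    Multiset.count x ({u, v} : Multiset G)
      = (if x = u then 1 else 0) + (if x = v then 1 else 0) := by
  rw [show ({u, v} : Multiset G) = u ::ₘ {v} from rfl, Multiset.count_cons,
    Multiset.count_singleton]
  split_ifs <;> omega

lemma pair_le_of_mem {A : Multiset G} {y z : G} (h : y ≠ z) (hy : y ∈ A) (hz : z ∈ A) :
    ({y, z} : Multiset G) ≤ A := by
  rw [Multiset.le_iff_count]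
  intro x
  rw [count_pair']
  have h1 : x = y → 1 ≤ Multiset.count x A := fun hh => hh ▸ Multiset.count_pos.mpr hy
  have h2 : x = z → 1 ≤ Multiset.count x A := fun hh => hh ▸ Multiset.count_pos.mpr hz
  split_ifs with a b c
  · exact absurd (a ▸ b.symm ▸ rfl : y = z) h
  · exact h1 a
  · exact h2 c
  · omega

lemma rep2_le_of_count {A : Multiset G} {y : G} (h : 2 ≤ Multiset.count y A) :
    ({y, y} : Multiset G) ≤ A := by
  rw [Multiset.le_iff_count]
  intro x
  rw [count_pair']
  split_ifs with a
  · subst a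
    omega
  · omega

lemma atom_no_pair {A : Multiset G} (hA : MinZeroSum A) (hc : 3 ≤ Multiset.card A)
    {y : G} (hyy : y ≠ -y) (h1 : y ∈ A) (h2 : -y ∈ A) : False := by
  have hle : ({y, -y} : Multiset G) ≤ A := pair_le_of_mem hyy h1 h2
  have heq := eq_of_zs hA hle (by simp) (by simp)
  have := congrArg Multiset.card heq
  simp at this
  omega

lemma atom_tor_count {A : Multiset G} (hA : MinZeroSum A) (hc : 3 ≤ Multiset.card A)
    {y : G} (hyy : y = -y) (h1 : y ∈ A) : Multiset.count y A = 1 := by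
  have hpos := Multiset.count_pos.mpr h1
  by_contra h
  have h2 : 2 ≤ Multiset.count y A := by omega
  have hle := rep2_le_of_count h2
  have heq := eq_of_zs hA hle (by simp) (by
    show ({y, y} : Multiset G).sum = 0
    rw [show ({y, y} : Multiset G).sum = y + y by simp]
    nth_rewrite 2 [hyy]
    exact add_neg_cancel y)
  have := congrArg Multiset.card heq
  simp at this
  omega

lemma build1 (H : AddSubgroup G) {A B C : Multiset G} {l₀ : List G}
    (hA : MinZeroSum A) (hB : MinZeroSum B) (hC : MinZeroSum C)
    (hmem : ∀ x ∈ A + B + C, x ∈ H ∧ x ≠ 0)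
    (h0 : ∀ x ∈ l₀, x ≠ 0) (hsum : A + B + C = psum l₀)
    {u v : G} (huv : ({u, v} : Multiset G) ≤ A) (hu : -u ∈ B) (hv : -v ∈ C) :
    Concl H l₀.length := by
  have hle2 : pair u + pair v ≤ psum l₀ := by
    rw [← hsum, Multiset.le_iff_count]
    intro x
    have hA' := Multiset.le_iff_count.mp huv x
    rw [count_pair'] at hA'
    have hBc : (if x = -u then 1 else 0) ≤ Multiset.count x B := by
      split_ifs with hh
      · exact hh ▸ Multiset.count_pos.mpr hu
      · exact Nat.zero_le _
    have hCc : (if x = -v then 1 else 0) ≤ Multiset.count x C := by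
      split_ifs with hh
      · exact hh ▸ Multiset.count_pos.mpr hv
      · exact Nat.zero_le _
    rw [Multiset.count_add, Multiset.count_add, Multiset.count_add, count_pair, count_pair]
    omega
  have hpu : pair u ≤ psum l₀ := le_trans (by exact le_add_right (le_refl _)) hle2
  obtain ⟨l₁, hl₁len, hl₁0, hl₁⟩ := psum_remove l₀ h0 u hpu
  have hpv : pair v ≤ psum l₁ := by
    rw [Multiset.le_iff_count]
    intro x
    have h1 := Multiset.le_iff_count.mp hle2 x
    have h2 := congrArg (Multiset.count x) hl₁
    rw [Multiset.count_add] at h1 h2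
    omega
  obtain ⟨l, hllen, hl0, hl⟩ := psum_remove l₁ hl₁0 v hpv
  refine ⟨A, B, C, u, v, l, hA, hB, hC, hmem, huv, hu, hv, ?_, by omega, hl0⟩
  rw [hsum, hl₁, hl, add_assoc]


lemma main3 (H : AddSubgroup G) {A B C : Multiset G} {l₀ : List G}
    (hA : MinZeroSum A) (hB : MinZeroSum B) (hC : MinZeroSum C)
    (hmem : ∀ x ∈ A + B + C, x ∈ H ∧ x ≠ 0)
    (h0 : ∀ x ∈ l₀, x ≠ 0) (hsum : A + B + C = psum l₀)
    (hcardA : 3 ≤ Multiset.card A)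
    (hnegmem : ∀ w ∈ A, -w ∈ B + C) (hnC : ∀ w ∈ A, -w ∉ C) :
    Concl H l₀.length := by
  have hbal : ∀ x : G, Multiset.count x (A + B + C) = Multiset.count (-x) (A + B + C) := by
    intro x
    rw [hsum]
    exact count_psum_symm l₀ x
  have heven : ∀ x : G, x = -x → 2 ∣ Multiset.count x (A + B + C) := by
    intro x hx
    rw [hsum]
    exact count_psum_even l₀ x hx
  have hnB : ∀ w ∈ A, -w ∈ B := by
    intro w hw
    rcases Multiset.mem_add.mp (hnegmem w hw) with h | h
    · exact h
    · exact absurd h (hnC w hw)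
  have hmapcount : ∀ y : G, Multiset.count y (A.map (fun z => -z)) = Multiset.count (-y) A := by
    intro y
    have := Multiset.count_map_eq_count' (fun z : G => -z) A neg_injective (-y)
    rwa [neg_neg] at this
  have hnegle : A.map (fun z => -z) ≤ B := by
    rw [Multiset.le_iff_count]
    intro y
    rw [hmapcount]
    by_contra hgt
    push_neg at hgt
    have hyA : -y ∈ A := Multiset.count_pos.mp (by omega)
    by_cases hyy : y = -y
    · have h1 : Multiset.count (-y) A = 1 := by
        refine atom_tor_count hA hcardA ?_ hyA
        rw [neg_neg]
        exact hyy.symm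
      have h2 : y ∈ B := by
        have := hnB (-y) hyA
        rwa [neg_neg] at this
      have := Multiset.count_pos.mpr h2
      omega
    · by_cases hyA' : y ∈ A
      · exact atom_no_pair hA hcardA hyy hyA' hyA
      · have hyC : y ∉ C := by
          intro hyC
          exact hnC (-y) hyA (by rwa [neg_neg])
        have hcA : Multiset.count y A = 0 := Multiset.count_eq_zero.mpr hyA'
        have hcC : Multiset.count y C = 0 := Multiset.count_eq_zero.mpr hyC
        have hb := hbal y
        rw [Multiset.count_add, Multiset.count_add, Multiset.count_add, Multiset.count_add] at hb
        have hge : 1 ≤ Multiset.count (-y) A := Multiset.count_pos.mpr hyA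
        omega
  have hBeq : A.map (fun z => -z) = B := by
    apply eq_of_zs hB hnegle
    · intro h
      exact hA.1 (by simpa using h)
    · rw [Multiset.sum_map_neg', hA.2.1, neg_zero]
  have hbalC : ∀ y : G, Multiset.count y C = Multiset.count (-y) C := by
    intro y
    have h1 := hbal y
    have hB1 : Multiset.count y B = Multiset.count (-y) A := by rw [← hBeq, hmapcount]
    have hB2 : Multiset.count (-y) B = Multiset.count y A := by
      rw [← hBeq, hmapcount, neg_neg]
    rw [Multiset.count_add, Multiset.count_add, Multiset.count_add, Multiset.count_add] at h1
    omega
  have hCpair : ∃ c : G, C = pair c := by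
    obtain ⟨c, hc⟩ := Multiset.exists_mem_of_ne_zero hC.1
    by_cases hcc : c = -c
    · have hevenC : 2 ∣ Multiset.count c C := by
        have hevenM := heven c hcc
        have hB1 : Multiset.count c B = Multiset.count (-c) A := by rw [← hBeq, hmapcount]
        rw [← hcc] at hB1
        rw [Multiset.count_add, Multiset.count_add] at hevenM
        omega
      have h2 : 2 ≤ Multiset.count c C := by
        have := Multiset.count_pos.mpr hc
        omega
      have heq := eq_of_zs hC (rep2_le_of_count h2) (by simp) (by
        show ({c, c} : Multiset G).sum = 0
        rw [show ({c, c} : Multiset G).sum = c + c by simp]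
        nth_rewrite 2 [hcc]
        exact add_neg_cancel c)
      refine ⟨c, ?_⟩
      rw [← heq]
      show ({c, c} : Multiset G) = {c, -c}
      rw [← hcc]
    · have hnc : -c ∈ C := by
        rw [← Multiset.count_pos, ← hbalC]
        exact Multiset.count_pos.mpr hc
      have heq := eq_of_zs hC (pair_le_of_mem hcc hc hnc) (by simp) (by simp)
      exact ⟨c, heq.symm⟩
  obtain ⟨c, hCc⟩ := hCpair
  have hcardsum : Multiset.card A + Multiset.card B + Multiset.card C = 2 * l₀.length := by
    have := congrArg Multiset.card hsum
    rw [show psum l₀ = (l₀.map pair).sum from rfl] at this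
    rw [← card_psum l₀]
    simpa [Multiset.card_add, psum] using this
  have hcardB : Multiset.card B = Multiset.card A := by
    rw [← hBeq, Multiset.card_map]
  have hcardC : Multiset.card C = 2 := by rw [hCc]; exact card_pair c
  -- construction
  obtain ⟨u, hu⟩ := Multiset.exists_mem_of_ne_zero hA.1
  obtain ⟨A1, hA1⟩ := Multiset.exists_cons_of_mem hu
  have hA1ne : A1 ≠ 0 := by
    intro h
    have := congrArg Multiset.card hA1
    rw [h] at this
    simp at this
    omega
  obtain ⟨v, hv⟩ := Multiset.exists_mem_of_ne_zero hA1ne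
  obtain ⟨A2, hA2⟩ := Multiset.exists_cons_of_mem hv
  have hvA : v ∈ A := by
    rw [hA1]
    exact Multiset.mem_cons_of_mem hv
  have hmemA : ∀ x ∈ A, x ∈ H ∧ x ≠ 0 := by
    intro x hx
    exact hmem x (Multiset.mem_add.mpr (Or.inl (Multiset.mem_add.mpr (Or.inl hx))))
  refine ⟨A, A.map (fun z => -z), pair v, u, v, A1.toList,
    hA, mzs_neg hA, mzs_pair (hmemA v hvA).2, ?_, ?_, ?_, ?_, ?_, ?_, ?_⟩
  · intro x hx
    rcases Multiset.mem_add.mp hx with hx' | hx'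
    · rcases Multiset.mem_add.mp hx' with h | h
      · exact hmemA x h
      · obtain ⟨a, haA, rfl⟩ := Multiset.mem_map.mp h
        exact ⟨neg_mem (hmemA a haA).1, neg_ne_zero.mpr (hmemA a haA).2⟩
    · rcases mem_pair.mp hx' with h | h
      · rw [h]
        exact hmemA v hvA
      · rw [h]
        exact ⟨neg_mem (hmemA v hvA).1, neg_ne_zero.mpr (hmemA v hvA).2⟩
  · rw [hA1, hA2]
    exact Multiset.cons_le_cons _ (Multiset.cons_le_cons _ (Multiset.zero_le _))
  · exact Multiset.mem_map_of_mem _ hu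
  · exact mem_pair.mpr (Or.inr rfl)
  · have h1 : A + A.map (fun z => -z) = psum A.toList := self_add_neg_eq_psum A
    have h2 : psum A.toList = pair u + psum A1.toList := by
      have hcoe : (A.toList : Multiset G) = ((u :: A1.toList : List G) : Multiset G) := by
        rw [Multiset.coe_toList]
        show A = u ::ₘ (A1.toList : Multiset G)
        rw [Multiset.coe_toList]
        exact hA1
      rw [psum_congr hcoe, psum_cons]
    rw [h1, h2, add_right_comm]
  · have hlA1 : A1.toList.length = Multiset.card A1 := by simp
    have hcA : Multiset.card A = Multiset.card A1 + 1 := by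
      rw [hA1]
      simp
    omega
  · intro x hx
    have hxA : x ∈ A := by
      rw [hA1]
      exact Multiset.mem_cons_of_mem (by simpa using hx)
    exact (hmemA x hxA).2



lemma main2 (H : AddSubgroup G) {A B C : Multiset G} {l₀ : List G}
    (hA : MinZeroSum A) (hB : MinZeroSum B) (hC : MinZeroSum C)
    (hmem : ∀ x ∈ A + B + C, x ∈ H ∧ x ≠ 0)
    (h0 : ∀ x ∈ l₀, x ≠ 0) (hsum : A + B + C = psum l₀)
    (hcardA : 3 ≤ Multiset.card A) :
    Concl H l₀.length := by
  have hbal : ∀ x : G, Multiset.count x (A + B + C) = Multiset.count (-x) (A + B + C) := by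
    intro x
    rw [hsum]
    exact count_psum_symm l₀ x
  have heven : ∀ x : G, x = -x → 2 ∣ Multiset.count x (A + B + C) := by
    intro x hx
    rw [hsum]
    exact count_psum_even l₀ x hx
  have hnegmem : ∀ w ∈ A, -w ∈ B + C := by
    intro w hw
    have hwA : 1 ≤ Multiset.count w A := Multiset.count_pos.mpr hw
    have hb := hbal w
    rw [Multiset.count_add, Multiset.count_add, Multiset.count_add, Multiset.count_add] at hb
    by_cases hww : w = -w
    · have h1 : Multiset.count w A = 1 := atom_tor_count hA hcardA hww hw
      have h2 := heven w hww
      rw [Multiset.count_add, Multiset.count_add] at h2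
      rw [← hww, ← Multiset.count_pos, Multiset.count_add]
      omega
    · have h3 : Multiset.count (-w) A = 0 := by
        rw [Multiset.count_eq_zero]
        intro hmem'
        exact atom_no_pair hA hcardA hww hw hmem'
      rw [← Multiset.count_pos, Multiset.count_add]
      omega
  by_cases hex : ∃ u v : G, ({u, v} : Multiset G) ≤ A ∧
      ((-u ∈ B ∧ -v ∈ C) ∨ (-u ∈ C ∧ -v ∈ B))
  · obtain ⟨u, v, huv, hcase⟩ := hex
    rcases hcase with ⟨hu', hv'⟩ | ⟨hu', hv'⟩
    · exact build1 H hA hB hC hmem h0 hsum huv hu' hv'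
    · have hacb : A + C + B = A + B + C := add_right_comm A C B
      exact build1 H hA hC hB (fun x hx => hmem x (hacb ▸ hx)) h0
        (by rw [hacb]; exact hsum) huv hu' hv'
  · have Hsplit : (∀ w ∈ A, -w ∉ C) ∨ (∀ w ∈ A, -w ∉ B) := by
      by_contra hcon
      push_neg at hcon
      obtain ⟨⟨w₁, hw₁A, hw₁C⟩, ⟨w₀, hw₀A, hw₀B⟩⟩ := hcon
      apply hex
      by_cases hne : w₀ = w₁
      · subst hne
        by_cases h2c : 2 ≤ Multiset.count w₀ A
        · exact ⟨w₀, w₀, rep2_le_of_count h2c, Or.inl ⟨hw₀B, hw₁C⟩⟩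
        · have hc1 : Multiset.count w₀ A = 1 := by
            have := Multiset.count_pos.mpr hw₀A
            omega
          have hce : A.erase w₀ ≠ 0 := by
            intro h
            have := Multiset.card_erase_of_mem hw₀A
            rw [h] at this
            simp at this
            omega
          obtain ⟨w', hw'⟩ := Multiset.exists_mem_of_ne_zero hce
          have hw'A : w' ∈ A := Multiset.mem_of_mem_erase hw'
          have hww' : w' ≠ w₀ := by
            intro h
            subst h
            have := Multiset.count_pos.mpr hw'
            rw [Multiset.count_erase_self] at this
            omega
          rcases Multiset.mem_add.mp (hnegmem w' hw'A) with hB' | hC'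
          · exact ⟨w', w₀, pair_le_of_mem hww' hw'A hw₀A, Or.inl ⟨hB', hw₁C⟩⟩
          · exact ⟨w₀, w', pair_le_of_mem hww'.symm hw₀A hw'A, Or.inl ⟨hw₀B, hC'⟩⟩
      · exact ⟨w₀, w₁, pair_le_of_mem hne hw₀A hw₁A, Or.inl ⟨hw₀B, hw₁C⟩⟩
    rcases Hsplit with hnC | hnB'
    · exact main3 H hA hB hC hmem h0 hsum hcardA hnegmem hnC
    · have hacb : A + C + B = A + B + C := add_right_comm A C B
      refine main3 H hA hC hB (fun x hx => hmem x (hacb ▸ hx)) h0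
        (by rw [hacb]; exact hsum) hcardA ?_ hnB'
      intro w hw
      have := hnegmem w hw
      rwa [add_comm] at this

lemma side (H : AddSubgroup G) (hH : H ≠ ⊥) {A B C : Multiset G} {l₀ : List G}
    (hA : MinZeroSum A) (hB : MinZeroSum B) (hC : MinZeroSum C)
    (hmem : ∀ x ∈ A + B + C, x ∈ H ∧ x ≠ 0)
    (h0 : ∀ x ∈ l₀, x ≠ 0) (hsum : A + B + C = psum l₀) :
    Concl H l₀.length := by
  have hmA : ∀ x ∈ A, x ∈ H ∧ x ≠ 0 :=
    fun x hx => hmem x (Multiset.mem_add.mpr (Or.inl (Multiset.mem_add.mpr (Or.inl hx))))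
  have hmB : ∀ x ∈ B, x ∈ H ∧ x ≠ 0 :=
    fun x hx => hmem x (Multiset.mem_add.mpr (Or.inl (Multiset.mem_add.mpr (Or.inr hx))))
  have hmC : ∀ x ∈ C, x ∈ H ∧ x ≠ 0 :=
    fun x hx => hmem x (Multiset.mem_add.mpr (Or.inr hx))
  have h2A : 2 ≤ Multiset.card A := two_le_card hA (fun x hx => (hmA x hx).2)
  have h2B : 2 ≤ Multiset.card B := two_le_card hB (fun x hx => (hmB x hx).2)
  have h2C : 2 ≤ Multiset.card C := two_le_card hC (fun x hx => (hmC x hx).2)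
  have hcardsum : Multiset.card A + Multiset.card B + Multiset.card C = 2 * l₀.length := by
    have := congrArg Multiset.card hsum
    rw [← card_psum l₀]
    simpa [Multiset.card_add] using this
  by_cases hbig : 3 ≤ Multiset.card A ∨ 3 ≤ Multiset.card B ∨ 3 ≤ Multiset.card C
  · rcases hbig with h | h | h
    · exact main2 H hA hB hC hmem h0 hsum h
    · have hp : B + A + C = A + B + C := by rw [add_comm B A]
      exact main2 H hB hA hC (fun x hx => hmem x (hp ▸ hx)) h0 (by rw [hp]; exact hsum) h
    · have hp : C + A + B = A + B + C := by
        rw [add_comm C A, add_right_comm A C B]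
      exact main2 H hC hA hB (fun x hx => hmem x (hp ▸ hx)) h0 (by rw [hp]; exact hsum) h
  · push_neg at hbig
    have hlen3 : l₀.length = 3 := by omega
    have hx : ∃ x : G, x ∈ H ∧ x ≠ 0 := by
      by_contra hno
      push_neg at hno
      exact hH ((AddSubgroup.eq_bot_iff_forall H).mpr (fun x hx => hno x hx))
    obtain ⟨x, hxH, hx0⟩ := hx
    refine ⟨pair x, pair x, pair x, x, -x, [x], mzs_pair hx0, mzs_pair hx0, mzs_pair hx0,
      ?_, le_refl _, ?_, ?_, ?_, by simp [hlen3], ?_⟩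
    · intro y hy
      have : y ∈ pair x := by
        rcases Multiset.mem_add.mp hy with h | h
        · rcases Multiset.mem_add.mp h with h' | h'
          · exact h'
          · exact h'
        · exact h
      rcases mem_pair.mp this with h | h <;> rw [h]
      · exact ⟨hxH, hx0⟩
      · exact ⟨neg_mem hxH, neg_ne_zero.mpr hx0⟩
    · exact mem_pair.mpr (Or.inr rfl)
    · rw [neg_neg]
      exact mem_pair.mpr (Or.inl rfl)
    · rw [pair_neg]
      show pair x + pair x + pair x = pair x + pair x + psum [x]
      rw [show psum [x] = pair x + 0 from rfl, add_zero]
    · intro y hy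
      rw [List.mem_singleton.mp hy]
      exact hx0


end Side


lemma card_finsum {ι : Type*} (s : Finset ι) (f : ι → Multiset G) :
    Multiset.card (∑ i ∈ s, f i) = ∑ i ∈ s, Multiset.card (f i) := by
  induction s using Finset.cons_induction with
  | empty => simp
  | cons a t ha ih => simp [Finset.sum_cons, ih]

lemma mem_erase_of_pair_le [DecidableEq G] {X : Multiset G} {u v : G}
    (h : ({u, v} : Multiset G) ≤ X) : u ∈ X.erase v := by
  have hc := Multiset.le_iff_count.mp h u
  rw [count_pair'] at hc
  rw [← Multiset.count_pos]
  by_cases huv : u = v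
  · subst huv
    rw [Multiset.count_erase_self]
    simp at hc
    omega
  · rw [Multiset.count_erase_of_ne huv]
    simp [huv] at hc
    omega

lemma extract [DecidableEq G] {V : Fin 3 → Multiset G} {ρ : ℕ}
    (h : TraversalFactorization V ρ 0) (H : AddSubgroup G) (hmem : ∀ i, ∀ x ∈ V i, x ∈ H) :
    ∃ l₀ : List G, l₀.length = ρ ∧ (∀ x ∈ l₀, x ≠ 0) ∧
      V 0 + V 1 + V 2 = psum l₀ ∧ (∀ x ∈ V 0 + V 1 + V 2, x ∈ H ∧ x ≠ 0) := by
  obtain ⟨W, T, J, hWmzs, hWT, hUT, hJcard, hJ3, hJ2⟩ := h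
  have hJ : J = ∅ := Finset.card_eq_zero.mp hJcard
  have hW2 : ∀ j, Multiset.card (W j) = 2 := fun j => hJ2 j (by simp [hJ])
  choose x hx0 hxp using fun j => mzs_card_two (hWmzs j) (hW2 j)
  have hsum : V 0 + V 1 + V 2 = ∑ j, W j := by
    have h1 : V 0 + V 1 + V 2 = ∑ i : Fin 3, V i := by rw [Fin.sum_univ_three]
    rw [h1]
    calc ∑ i : Fin 3, V i = ∑ i : Fin 3, ∑ j, T j i :=
          Finset.sum_congr rfl (fun i _ => hUT i)
      _ = ∑ j, ∑ i : Fin 3, T j i := Finset.sum_comm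
      _ = ∑ j, W j := Finset.sum_congr rfl (fun j _ => by rw [hWT j, Fin.sum_univ_three])
  have hsum2 : ∑ j, W j = psum (List.ofFn x) := by
    rw [show psum (List.ofFn x) = ((List.ofFn x).map pair).sum from rfl, List.map_ofFn,
      List.sum_ofFn]
    exact Finset.sum_congr rfl (fun j _ => by rw [hxp j]; rfl)
  have hnz : ∀ y ∈ List.ofFn x, y ≠ 0 := by
    intro y hy
    obtain ⟨j, hj⟩ := List.mem_ofFn.mp hy
    rw [← hj]
    exact hx0 j
  refine ⟨List.ofFn x, by simp, hnz, by rw [hsum, hsum2], ?_⟩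
  intro y hy
  constructor
  · rcases Multiset.mem_add.mp hy with h' | h'
    · rcases Multiset.mem_add.mp h' with h'' | h''
      · exact hmem 0 y h''
      · exact hmem 1 y h''
    · exact hmem 2 y h'
  · intro h0'
    subst h0'
    apply zero_not_mem_psum (List.ofFn x) hnz
    rw [← hsum2, ← hsum]
    exact hy



lemma get_tail_prop {α : Type*} (P : α → Prop) (a : α) (l : List α) (h : ∀ p ∈ l, P p) :
    ∀ (k : Fin (a :: l).length), k.val ≠ 0 → P ((a :: l).get k) := by
  rintro ⟨kv, hk⟩ hne
  cases kv with
  | zero => exact absurd rfl hne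
  | succ n =>
    have he : (a :: l).get ⟨n + 1, hk⟩ = l.get ⟨n, by simpa using hk⟩ := rfl
    rw [he]
    exact h _ (l.get_mem _)


end Stmt15

theorem stmt15 {G : Type*} [AddCommGroup G] [Fintype G]
    (G₁ G₂ : AddSubgroup G) (h1 : G₁ ≠ ⊥) (h2 : G₂ ≠ ⊥)
    (hcompl : IsCompl G₁ G₂)
    (V₁ V₂ : Fin 3 → Multiset G) (ρ₁ ρ₂ : ℕ)
    (hV₁mem : ∀ i, ∀ x ∈ V₁ i, x ∈ G₁) (hV₂mem : ∀ i, ∀ x ∈ V₂ i, x ∈ G₂)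
    (hV₁ : ∀ i, MinZeroSum (V₁ i)) (hV₂ : ∀ i, MinZeroSum (V₂ i))
    (hf₁ : TraversalFactorization V₁ ρ₁ 0)
    (hf₂ : TraversalFactorization V₂ ρ₂ 0) :
    (∃ U : Fin 3 → Multiset G, (∀ i, MinZeroSum (U i)) ∧
      TraversalFactorization U (ρ₁ + ρ₂ - 2) 1) ∧
    ρ₁ + ρ₂ - 2 ≤ rho G 3 := by
  classical
  open Stmt15 in
  have hdis : ∀ x : G, x ∈ G₁ → x ∈ G₂ → x = 0 := by
    intro x hx1 hx2
    exact (AddSubgroup.disjoint_def.mp hcompl.disjoint) hx1 hx2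
  have hzero : ∀ x y : G, x ∈ G₁ → y ∈ G₂ → x + y = 0 → x = 0 ∧ y = 0 := by
    intro x y hx hy hxy
    have hyx : x = -y := eq_neg_of_add_eq_zero_left hxy
    have hx2 : x ∈ G₂ := hyx ▸ neg_mem hy
    have hx0 : x = 0 := hdis x hx hx2
    exact ⟨hx0, by rw [hx0, zero_add] at hxy; exact hxy⟩
  obtain ⟨l₀₁, hl₀₁len, hl₀₁0, hsum₁, hmem₁⟩ := Stmt15.extract hf₁ G₁ hV₁mem
  obtain ⟨l₀₂, hl₀₂len, hl₀₂0, hsum₂, hmem₂⟩ := Stmt15.extract hf₂ G₂ hV₂mem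
  obtain ⟨X₁, Y₁, Z₁, u₁, v₁, l₁, hX₁, hY₁, hZ₁, hmemXYZ₁, huv₁, hu₁, hv₁, hsumXYZ₁, hlen₁, hl₁0⟩ :=
    Stmt15.side G₁ h1 (hV₁ 0) (hV₁ 1) (hV₁ 2) hmem₁ hl₀₁0 hsum₁
  obtain ⟨X₂, Y₂, Z₂, u₂, v₂, l₂, hX₂, hY₂, hZ₂, hmemXYZ₂, huv₂, hu₂, hv₂, hsumXYZ₂, hlen₂, hl₂0⟩ :=
    Stmt15.side G₂ h2 (hV₂ 0) (hV₂ 1) (hV₂ 2) hmem₂ hl₀₂0 hsum₂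
  rw [hl₀₁len] at hlen₁
  rw [hl₀₂len] at hlen₂
  have hmX₁ : ∀ x ∈ X₁, x ∈ G₁ ∧ x ≠ 0 :=
    fun x hx => hmemXYZ₁ x (Multiset.mem_add.mpr (Or.inl (Multiset.mem_add.mpr (Or.inl hx))))
  have hmY₁ : ∀ x ∈ Y₁, x ∈ G₁ ∧ x ≠ 0 :=
    fun x hx => hmemXYZ₁ x (Multiset.mem_add.mpr (Or.inl (Multiset.mem_add.mpr (Or.inr hx))))
  have hmZ₁ : ∀ x ∈ Z₁, x ∈ G₁ ∧ x ≠ 0 :=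
    fun x hx => hmemXYZ₁ x (Multiset.mem_add.mpr (Or.inr hx))
  have hmX₂ : ∀ x ∈ X₂, x ∈ G₂ ∧ x ≠ 0 :=
    fun x hx => hmemXYZ₂ x (Multiset.mem_add.mpr (Or.inl (Multiset.mem_add.mpr (Or.inl hx))))
  have hmY₂ : ∀ x ∈ Y₂, x ∈ G₂ ∧ x ≠ 0 :=
    fun x hx => hmemXYZ₂ x (Multiset.mem_add.mpr (Or.inl (Multiset.mem_add.mpr (Or.inr hx))))
  have hmZ₂ : ∀ x ∈ Z₂, x ∈ G₂ ∧ x ≠ 0 :=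
    fun x hx => hmemXYZ₂ x (Multiset.mem_add.mpr (Or.inr hx))
  have hu₁X : u₁ ∈ X₁ := Multiset.mem_of_le huv₁ (by simp)
  have hv₁X : v₁ ∈ X₁ := Multiset.mem_of_le huv₁ (by simp)
  have hu₂X : u₂ ∈ X₂ := Multiset.mem_of_le huv₂ (by simp)
  have hv₂X : v₂ ∈ X₂ := Multiset.mem_of_le huv₂ (by simp)
  have hu₁0 : u₁ ≠ 0 := (hmX₁ u₁ hu₁X).2
  have hv₁0 : v₁ ≠ 0 := (hmX₁ v₁ hv₁X).2
  have hu₂0 : u₂ ≠ 0 := (hmX₂ u₂ hu₂X).2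
  have hv₂0 : v₂ ≠ 0 := (hmX₂ v₂ hv₂X).2
  have hu₁G : u₁ ∈ G₁ := (hmX₁ u₁ hu₁X).1
  have hv₁G : v₁ ∈ G₁ := (hmX₁ v₁ hv₁X).1
  have hu₂G : u₂ ∈ G₂ := (hmX₂ u₂ hu₂X).1
  have hv₂G : v₂ ∈ G₂ := (hmX₂ v₂ hv₂X).1
  have hu₁e : u₁ ∈ X₁.erase v₁ := Stmt15.mem_erase_of_pair_le huv₁
  have hu₂e : u₂ ∈ X₂.erase v₂ := Stmt15.mem_erase_of_pair_le huv₂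
  -- the nine pieces
  set P₁ := Y₁.erase (-u₁) with hP₁def
  set Q₁ := (X₁.erase v₁).erase u₁ with hQ₁def
  set R₁ := Z₁.erase (-v₁) with hR₁def
  set P₂ := Y₂.erase (-u₂) with hP₂def
  set Q₂ := Z₂.erase (-v₂) with hQ₂def
  set R₂ := (X₂.erase v₂).erase u₂ with hR₂def
  have hcount_erase : ∀ (s : Multiset G) (a x : G), a ∈ s →
      Multiset.count x (s.erase a) = Multiset.count x s - (if x = a then 1 else 0) := by
    intro s a x ha
    by_cases hxa : x = a
    · subst hxa
      rw [Multiset.count_erase_self]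
      simp
    · rw [Multiset.count_erase_of_ne hxa]
      simp [hxa]
  have hPQR₁ : P₁ + Q₁ + R₁ = Stmt15.psum l₁ := by
    ext x
    have hh := congrArg (Multiset.count x) hsumXYZ₁
    rw [Multiset.count_add, Multiset.count_add, Multiset.count_add, Multiset.count_add,
      Stmt15.count_pair, Stmt15.count_pair] at hh
    have hcX : (if x = u₁ then 1 else 0) + (if x = v₁ then 1 else 0) ≤ Multiset.count x X₁ := by
      have := Multiset.le_iff_count.mp huv₁ x
      rwa [Stmt15.count_pair'] at this
    have hcY : (if x = -u₁ then 1 else 0) ≤ Multiset.count x Y₁ := by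
      split_ifs with hc
      · exact hc ▸ Multiset.count_pos.mpr hu₁
      · exact Nat.zero_le _
    have hcZ : (if x = -v₁ then 1 else 0) ≤ Multiset.count x Z₁ := by
      split_ifs with hc
      · exact hc ▸ Multiset.count_pos.mpr hv₁
      · exact Nat.zero_le _
    have cP : Multiset.count x P₁ = Multiset.count x Y₁ - (if x = -u₁ then 1 else 0) :=
      hcount_erase Y₁ (-u₁) x hu₁
    have cR : Multiset.count x R₁ = Multiset.count x Z₁ - (if x = -v₁ then 1 else 0) :=
      hcount_erase Z₁ (-v₁) x hv₁
    have cQ : Multiset.count x Q₁ = Multiset.count x X₁ - (if x = v₁ then 1 else 0)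
        - (if x = u₁ then 1 else 0) := by
      rw [hQ₁def, hcount_erase _ u₁ x hu₁e, hcount_erase X₁ v₁ x hv₁X]
    rw [Multiset.count_add, Multiset.count_add, cP, cQ, cR]
    split_ifs at hh hcX hcY hcZ ⊢ <;> omega
  have hPQR₂ : P₂ + Q₂ + R₂ = Stmt15.psum l₂ := by
    ext x
    have hh := congrArg (Multiset.count x) hsumXYZ₂
    rw [Multiset.count_add, Multiset.count_add, Multiset.count_add, Multiset.count_add,
      Stmt15.count_pair, Stmt15.count_pair] at hh
    have hcX : (if x = u₂ then 1 else 0) + (if x = v₂ then 1 else 0) ≤ Multiset.count x X₂ := by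
      have := Multiset.le_iff_count.mp huv₂ x
      rwa [Stmt15.count_pair'] at this
    have hcY : (if x = -u₂ then 1 else 0) ≤ Multiset.count x Y₂ := by
      split_ifs with hc
      · exact hc ▸ Multiset.count_pos.mpr hu₂
      · exact Nat.zero_le _
    have hcZ : (if x = -v₂ then 1 else 0) ≤ Multiset.count x Z₂ := by
      split_ifs with hc
      · exact hc ▸ Multiset.count_pos.mpr hv₂
      · exact Nat.zero_le _
    have cP : Multiset.count x P₂ = Multiset.count x Y₂ - (if x = -u₂ then 1 else 0) :=
      hcount_erase Y₂ (-u₂) x hu₂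
    have cQ : Multiset.count x Q₂ = Multiset.count x Z₂ - (if x = -v₂ then 1 else 0) :=
      hcount_erase Z₂ (-v₂) x hv₂
    have cR : Multiset.count x R₂ = Multiset.count x X₂ - (if x = v₂ then 1 else 0)
        - (if x = u₂ then 1 else 0) := by
      rw [hR₂def, hcount_erase _ u₂ x hu₂e, hcount_erase X₂ v₂ x hv₂X]
    rw [Multiset.count_add, Multiset.count_add, cP, cQ, cR]
    split_ifs at hh hcX hcY hcZ ⊢ <;> omega
  obtain ⟨t₁, ht₁len, ht₁mem, ht₁P, ht₁Q, ht₁R⟩ :=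
    Stmt15.split3 (l₁.map Stmt15.pair) P₁ Q₁ R₁ hPQR₁
  obtain ⟨t₂, ht₂len, ht₂mem, ht₂P, ht₂Q, ht₂R⟩ :=
    Stmt15.split3 (l₂.map Stmt15.pair) P₂ Q₂ R₂ hPQR₂
  set w0 : G := -u₁ + -u₂ with hw0def
  set w1 : G := v₁ + -v₂ with hw1def
  have hw00 : w0 ≠ 0 := by
    intro h
    rw [hw0def] at h
    exact hu₁0 (by simpa using (hzero _ _ (neg_mem hu₁G) (neg_mem hu₂G) h).1)
  have hw10 : w1 ≠ 0 := by
    intro h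
    rw [hw1def] at h
    exact hv₁0 (hzero _ _ hv₁G (neg_mem hv₂G) h).1
  have hnegw1 : -w1 = -v₁ + v₂ := by rw [hw1def]; abel
  set U₀ := P₁ + P₂ + ({w0} : Multiset G) with hU₀def
  set U₁ := (X₁.erase v₁) + Q₂ + ({w1} : Multiset G) with hU₁def
  set U₂ := R₁ + (X₂.erase v₂) + ({-v₁ + v₂} : Multiset G) with hU₂def
  have hU₀mzs : MinZeroSum U₀ := by
    rw [hU₀def, hP₁def, hP₂def, hw0def]
    exact Stmt15.merge_atom G₁ G₂ hdis hY₁ hY₂ (fun x hx => (hmY₁ x hx).1)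
      (fun x hx => (hmY₂ x hx).1) hu₁ hu₂
  have hU₁mzs : MinZeroSum U₁ := by
    rw [hU₁def, hQ₂def, hw1def]
    exact Stmt15.merge_atom G₁ G₂ hdis hX₁ hZ₂ (fun x hx => (hmX₁ x hx).1)
      (fun x hx => (hmZ₂ x hx).1) hv₁X hv₂
  have hU₂mzs : MinZeroSum U₂ := by
    rw [hU₂def, hR₁def]
    exact Stmt15.merge_atom G₁ G₂ hdis hZ₁ hX₂ (fun x hx => (hmZ₁ x hx).1)
      (fun x hx => (hmX₂ x hx).1) hv₁ hv₂X
  set Wsp : Multiset G := {w0, u₁, u₂} with hWspdef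
  have hWspmzs : MinZeroSum Wsp := by
    rw [hWspdef]
    refine Stmt15.mzs_triple ?_ hw00 hu₁0 hu₂0
    rw [hw0def]
    abel
  set Pm := Stmt15.pair w1 with hPmdef
  have hPmmzs : MinZeroSum Pm := Stmt15.mzs_pair hw10
  set gq : Multiset G × Multiset G × Multiset G → Multiset G × (Fin 3 → Multiset G) :=
    fun q => (q.1 + q.2.1 + q.2.2, ![q.1, q.2.1, q.2.2]) with hgdef
  set Tsp : Fin 3 → Multiset G := ![{w0}, {u₁}, {u₂}] with hTspdef
  set Tm : Fin 3 → Multiset G := ![0, {w1}, {-w1}] with hTmdef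
  set LP : List (Multiset G × (Fin 3 → Multiset G)) :=
    (Wsp, Tsp) :: (Pm, Tm) :: (t₁.map gq ++ t₂.map gq) with hLPdef
  have hmlen : ρ₁ + ρ₂ - 2 = LP.length := by
    rw [hLPdef]
    simp only [List.length_cons, List.length_append, List.length_map, ht₁len, ht₂len]
    omega
  have htail2 : ∀ p ∈ (Pm, Tm) :: (t₁.map gq ++ t₂.map gq),
      MinZeroSum p.1 ∧ Multiset.card p.1 = 2 ∧ p.1 = p.2 0 + p.2 1 + p.2 2 := by
    intro p hp
    rcases List.mem_cons.mp hp with rfl | hp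
    · refine ⟨hPmmzs, by rw [hPmdef]; exact Stmt15.card_pair w1, ?_⟩
      show Pm = Tm 0 + Tm 1 + Tm 2
      rw [hPmdef, hTmdef]
      show Stmt15.pair w1 = 0 + {w1} + {-w1}
      rw [zero_add]
      rfl
    · have hgen : ∀ (t : List (Multiset G × Multiset G × Multiset G)) (l : List G),
          (∀ q ∈ t, q.1 + q.2.1 + q.2.2 ∈ l.map Stmt15.pair) → (∀ x ∈ l, x ≠ 0) →
          p ∈ t.map gq →
          MinZeroSum p.1 ∧ Multiset.card p.1 = 2 ∧ p.1 = p.2 0 + p.2 1 + p.2 2 := by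
        intro t l htm hl hmem'
        obtain ⟨q, hq, rfl⟩ := List.mem_map.mp hmem'
        obtain ⟨y, hy, hyq⟩ := List.mem_map.mp (htm q hq)
        have h1 : (gq q).1 = Stmt15.pair y := by rw [hgdef]; exact hyq.symm
        refine ⟨by rw [h1]; exact Stmt15.mzs_pair (hl y hy),
          by rw [h1]; exact Stmt15.card_pair y, ?_⟩
        show (gq q).1 = (gq q).2 0 + (gq q).2 1 + (gq q).2 2
        rw [hgdef]
        rfl
      rcases List.mem_append.mp hp with hp' | hp'
      · exact hgen t₁ l₁ ht₁mem hl₁0 hp'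
      · exact hgen t₂ l₂ ht₂mem hl₂0 hp'
  have hheadeq : Wsp = Tsp 0 + Tsp 1 + Tsp 2 := by
    rw [hWspdef, hTspdef]
    rfl
  have hall : ∀ p ∈ LP, MinZeroSum p.1 ∧ p.1 = p.2 0 + p.2 1 + p.2 2 := by
    intro p hp
    rw [hLPdef] at hp
    rcases List.mem_cons.mp hp with rfl | hp
    · exact ⟨hWspmzs, hheadeq⟩
    · obtain ⟨h1, _, h3⟩ := htail2 p hp
      exact ⟨h1, h3⟩
  -- column sums
  have hcomp0 : ((fun p : Multiset G × (Fin 3 → Multiset G) => p.2 0) ∘ gq)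
      = fun q => q.1 := by
    funext q
    rfl
  have hcomp1 : ((fun p : Multiset G × (Fin 3 → Multiset G) => p.2 1) ∘ gq)
      = fun q => q.2.1 := by
    funext q
    rfl
  have hcomp2 : ((fun p : Multiset G × (Fin 3 → Multiset G) => p.2 2) ∘ gq)
      = fun q => q.2.2 := by
    funext q
    rfl
  have hcol0 : (LP.map (fun p => p.2 0)).sum = U₀ := by
    rw [hLPdef]
    rw [List.map_cons, List.map_cons, List.sum_cons, List.sum_cons, List.map_append,
      List.sum_append, List.map_map, List.map_map, hcomp0, ht₁P, ht₂P]
    show Tsp 0 + (Tm 0 + (P₁ + P₂)) = U₀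
    rw [hTspdef, hTmdef]
    show ({w0} : Multiset G) + ((0 : Multiset G) + (P₁ + P₂)) = U₀
    rw [zero_add, hU₀def, add_comm]
  have hcol1 : (LP.map (fun p => p.2 1)).sum = U₁ := by
    rw [hLPdef]
    rw [List.map_cons, List.map_cons, List.sum_cons, List.sum_cons, List.map_append,
      List.sum_append, List.map_map, List.map_map, hcomp1, ht₁Q, ht₂Q]
    show Tsp 1 + (Tm 1 + (Q₁ + Q₂)) = U₁
    rw [hTspdef, hTmdef]
    show ({u₁} : Multiset G) + (({w1} : Multiset G) + (Q₁ + Q₂)) = U₁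
    calc ({u₁} : Multiset G) + (({w1} : Multiset G) + (Q₁ + Q₂))
        = (({u₁} : Multiset G) + Q₁) + Q₂ + {w1} := by ac_rfl
      _ = U₁ := by
          rw [Multiset.singleton_add, hQ₁def, Multiset.cons_erase hu₁e, hU₁def]
  have hcol2 : (LP.map (fun p => p.2 2)).sum = U₂ := by
    rw [hLPdef]
    rw [List.map_cons, List.map_cons, List.sum_cons, List.sum_cons, List.map_append,
      List.sum_append, List.map_map, List.map_map, hcomp2, ht₁R, ht₂R]
    show Tsp 2 + (Tm 2 + (R₁ + R₂)) = U₂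
    rw [hTspdef, hTmdef]
    show ({u₂} : Multiset G) + (({-w1} : Multiset G) + (R₁ + R₂)) = U₂
    calc ({u₂} : Multiset G) + (({-w1} : Multiset G) + (R₁ + R₂))
        = R₁ + (({u₂} : Multiset G) + R₂) + {-w1} := by ac_rfl
      _ = U₂ := by
          rw [Multiset.singleton_add, hR₂def, Multiset.cons_erase hu₂e, hU₂def, hnegw1]
  have hpos : 0 < ρ₁ + ρ₂ - 2 := by omega
  set j₀ : Fin (ρ₁ + ρ₂ - 2) := ⟨0, hpos⟩ with hj₀def
  have hget0 : LP.get (Fin.cast hmlen j₀) = (Wsp, Tsp) := rfl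
  have hUcol : ∀ i : Fin 3, (![U₀, U₁, U₂] : Fin 3 → Multiset G) i
      = ∑ j, (LP.get (Fin.cast hmlen j)).2 i := by
    intro i
    rw [Stmt15.fin_sum_list LP (fun p => p.2 i) _ hmlen]
    fin_cases i
    · exact hcol0.symm
    · exact hcol1.symm
    · exact hcol2.symm
  have hTF : TraversalFactorization ![U₀, U₁, U₂] (ρ₁ + ρ₂ - 2) 1 := by
    refine ⟨fun j => (LP.get (Fin.cast hmlen j)).1, fun j => (LP.get (Fin.cast hmlen j)).2,
      {j₀}, ?_, ?_, ?_, by simp, ?_, ?_⟩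
    · intro j
      exact (hall _ (LP.get_mem _)).1
    · intro j
      exact (hall _ (LP.get_mem _)).2
    · intro i
      exact hUcol i
    · intro j hj
      have hj' : j = j₀ := Finset.mem_singleton.mp hj
      subst hj'
      have e1 : (LP.get (Fin.cast hmlen j₀)).1 = Wsp := by rw [hget0]
      have e2 : (LP.get (Fin.cast hmlen j₀)).2 = Tsp := by rw [hget0]
      refine ⟨?_, ?_⟩
      · show Multiset.card (LP.get (Fin.cast hmlen j₀)).1 = 3
        rw [e1, hWspdef]
        rfl
      · intro i
        show Multiset.card ((LP.get (Fin.cast hmlen j₀)).2 i) = 1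
        rw [e2, hTspdef]
        fin_cases i <;> rfl
    · intro j hj
      have hval : (Fin.cast hmlen j).val ≠ 0 := by
        intro h
        apply hj
        rw [Finset.mem_singleton, hj₀def]
        apply Fin.ext
        simpa using h
      show Multiset.card (LP.get (Fin.cast hmlen j)).1 = 2
      exact Stmt15.get_tail_prop (fun p => Multiset.card p.1 = 2) (Wsp, Tsp)
        ((Pm, Tm) :: (t₁.map gq ++ t₂.map gq))
        (fun p hp => (htail2 p hp).2.1) (Fin.cast hmlen j) hval
  refine ⟨⟨![U₀, U₁, U₂], ?_, hTF⟩, ?_⟩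
  · intro i
    fin_cases i
    · exact hU₀mzs
    · exact hU₁mzs
    · exact hU₂mzs
  · -- rho bound
    have hWT' : ∀ j : Fin (ρ₁ + ρ₂ - 2), (LP.get (Fin.cast hmlen j)).1
        = (LP.get (Fin.cast hmlen j)).2 0 + (LP.get (Fin.cast hmlen j)).2 1
          + (LP.get (Fin.cast hmlen j)).2 2 :=
      fun j => (hall _ (LP.get_mem _)).2
    have hsumUW : (∑ i, (![U₀, U₁, U₂] : Fin 3 → Multiset G) i)
        = ∑ j : Fin (ρ₁ + ρ₂ - 2), (LP.get (Fin.cast hmlen j)).1 := by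
      calc (∑ i, (![U₀, U₁, U₂] : Fin 3 → Multiset G) i)
          = ∑ i : Fin 3, ∑ j : Fin (ρ₁ + ρ₂ - 2), (LP.get (Fin.cast hmlen j)).2 i :=
            Finset.sum_congr rfl (fun i _ => hUcol i)
        _ = ∑ j : Fin (ρ₁ + ρ₂ - 2), ∑ i : Fin 3, (LP.get (Fin.cast hmlen j)).2 i :=
            Finset.sum_comm
        _ = ∑ j : Fin (ρ₁ + ρ₂ - 2), (LP.get (Fin.cast hmlen j)).1 := by
            refine Finset.sum_congr rfl (fun j _ => ?_)
            rw [hWT' j, Fin.sum_univ_three]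
    have hmem' : (ρ₁ + ρ₂ - 2) ∈ {m : ℕ | ∃ (U : Fin 3 → Multiset G) (V : Fin m → Multiset G),
        (∀ i, MinZeroSum (U i)) ∧ (∀ j, MinZeroSum (V j)) ∧ (∑ i, U i) = (∑ j, V j)} := by
      refine ⟨![U₀, U₁, U₂], fun j => (LP.get (Fin.cast hmlen j)).1, ?_, ?_, hsumUW⟩
      · intro i
        fin_cases i
        · exact hU₀mzs
        · exact hU₁mzs
        · exact hU₂mzs
      · intro j
        exact (hall _ (LP.get_mem _)).1
    have hbdd : BddAbove {m : ℕ | ∃ (U : Fin 3 → Multiset G) (V : Fin m → Multiset G),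
        (∀ i, MinZeroSum (U i)) ∧ (∀ j, MinZeroSum (V j)) ∧ (∑ i, U i) = (∑ j, V j)} := by
      refine ⟨3 * Fintype.card G, ?_⟩
      rintro m ⟨U', V', hU', hV', hEq⟩
      have h1 : m ≤ Multiset.card (∑ j, V' j) := by
        rw [Stmt15.card_finsum]
        calc m = ∑ _j : Fin m, 1 := by simp
          _ ≤ ∑ j, Multiset.card (V' j) := by
              refine Finset.sum_le_sum (fun j _ => ?_)
              exact Multiset.card_pos.mpr (hV' j).1
      have h2 : Multiset.card (∑ i, U' i) ≤ 3 * Fintype.card G := by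
        rw [Stmt15.card_finsum, Fin.sum_univ_three]
        have b0 := Stmt15.mzs_card_le (hU' 0)
        have b1 := Stmt15.mzs_card_le (hU' 1)
        have b2 := Stmt15.mzs_card_le (hU' 2)
        omega
      rw [← hEq] at h1
      omega
    exact le_csSup hbdd hmem'
end

section
/- Let G = C_n^3 with n ≥ 2, so that D*(G) = 3n − 2. Then there exist minimal zero-sum sequences U_1, U_2, U_3 over G whose product U_1·U_2·U_3 admits a factorization into (3n−2) + ⌊(3n−2)/2⌋ minimal zero-sum sequences such that: if n is odd, exactly one of these atoms has length 3 (containing exactly one term from each of U_1, U_2, U_3) and all others have length 2; and if n is even, all of these atoms have length 2. In particular, ρ_3(C_n^3) ≥ D*(G) + ⌊D*(G)/2⌋. -/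
namespace Stmt16Aux

variable {G : Type*} [AddCommGroup G]

lemma split_le [DecidableEq G] {T A B : Multiset G} (h : T ≤ A + B) :
    ∃ T₁ T₂, T₁ ≤ A ∧ T₂ ≤ B ∧ T = T₁ + T₂ := by
  refine ⟨T ∩ A, T - A, Multiset.inter_le_right .., ?_, ?_⟩
  · rw [Multiset.sub_le_iff_le_add]
    exact h.trans (le_of_eq (add_comm A B))
  · ext a
    simp only [Multiset.count_add, Multiset.count_inter, Multiset.count_sub]
    omega

lemma le_replicate_decomp {T : Multiset G} {k : ℕ} {a : G}
    (h : T ≤ Multiset.replicate k a) :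
    T = Multiset.replicate (Multiset.card T) a ∧ Multiset.card T ≤ k := by
  constructor
  · rw [Multiset.eq_replicate_card]
    exact fun b hb => Multiset.eq_of_mem_replicate (Multiset.mem_of_le h hb)
  · simpa using Multiset.card_le_card h

lemma minZeroSum_pair {x : G} (hx : x ≠ 0) : MinZeroSum ({x, -x} : Multiset G) := by
  refine ⟨by simp, by simp, ?_⟩
  intro T hT hT0 hTS hsum
  have hcard : Multiset.card T ≤ 2 := by simpa using Multiset.card_le_card hT
  have h2 : Multiset.card T ≠ 2 := by
    intro h
    exact hTS (Multiset.eq_of_le_of_card_le hT (by simp [h]))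
  have h0 : Multiset.card T ≠ 0 := by simpa [Multiset.card_eq_zero] using hT0
  have h1 : Multiset.card T = 1 := by omega
  obtain ⟨y, rfl⟩ := Multiset.card_eq_one.mp h1
  have hy : y ∈ ({x, -x} : Multiset G) := Multiset.mem_of_le hT (by simp)
  simp only [Multiset.sum_singleton] at hsum
  simp only [Multiset.insert_eq_cons, Multiset.mem_cons, Multiset.mem_singleton] at hy
  rcases hy with rfl | rfl
  · exact hx hsum
  · exact hx (by simpa using hsum)

lemma minZeroSum_triple {x y z : G} (hx : x ≠ 0) (hy : y ≠ 0) (hz : z ≠ 0)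
    (h : x + y + z = 0) : MinZeroSum ({x, y, z} : Multiset G) := by
  have hsumS : ({x, y, z} : Multiset G).sum = 0 := by
    simp [← add_assoc, h]
  refine ⟨by simp, hsumS, ?_⟩
  intro T hT hT0 hTS hsum
  obtain ⟨R, hR⟩ := Multiset.le_iff_exists_add.mp hT
  have hcardT : Multiset.card T ≤ 3 := by
    have := Multiset.card_le_card hT; simpa using this
  have h3 : Multiset.card T ≠ 3 := by
    intro h'
    exact hTS (Multiset.eq_of_le_of_card_le hT (by simp [h']))
  have h0 : Multiset.card T ≠ 0 := by simpa [Multiset.card_eq_zero] using hT0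
  have hmemS : ∀ w ∈ ({x, y, z} : Multiset G), w ≠ 0 := by
    intro w hw
    simp only [Multiset.insert_eq_cons, Multiset.mem_cons, Multiset.mem_singleton] at hw
    rcases hw with rfl | rfl | rfl <;> assumption
  interval_cases hc : Multiset.card T
  · omega
  · obtain ⟨w, rfl⟩ := Multiset.card_eq_one.mp hc
    exact hmemS w (Multiset.mem_of_le hT (by simp)) (by simpa using hsum)
  · -- card T = 2, complement R is a singleton
    have hcR : Multiset.card R = 1 := by
      have := congrArg Multiset.card hR
      simp only [Multiset.card_add] at this
      simp only [hc] at this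
      have h3' : Multiset.card ({x, y, z} : Multiset G) = 3 := by simp
      omega
    obtain ⟨d, rfl⟩ := Multiset.card_eq_one.mp hcR
    have hd : d ∈ ({x, y, z} : Multiset G) := by
      rw [hR]; simp
    have : T.sum + d = 0 := by
      have := congrArg Multiset.sum hR
      simp only [Multiset.sum_add, Multiset.sum_singleton] at this
      rw [hsumS] at this
      exact this.symm
    rw [hsum, zero_add] at this
    exact hmemS d hd this
  · omega


lemma minZeroSum_family [DecidableEq G] {n : ℕ} [NeZero n] (hn : 1 ≤ n) (u w : G) (C : Multiset G)
    (φ1 φ2 φ3 : G →+ ZMod n)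
    (h1u : φ1 u = 1) (h1w : φ1 w = 0)
    (h2u : φ2 u = 0) (h2w : φ2 w = 0)
    (h3u : φ3 u = 0) (h3w : φ3 w = 1)
    (h2C : ∀ c ∈ C, φ2 c = 1)
    (hCsum : C.sum = u + w)
    (hCcard : Multiset.card C = n)
    (hsep : ∀ g : G, φ1 g = 0 → φ2 g = 0 → φ3 g = 0 → g = 0) :
    MinZeroSum (Multiset.replicate (n-1) u + Multiset.replicate (n-1) w + C) := by
  have hord : ∀ g : G, n • g = 0 := by
    intro g
    have e : ∀ ψ : G →+ ZMod n, ψ (n • g) = 0 := by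
      intro ψ
      rw [map_nsmul]
      show n • ψ g = 0
      rw [nsmul_eq_mul, ZMod.natCast_self, zero_mul]
    exact hsep _ (e φ1) (e φ2) (e φ3)
  have hCne : C ≠ 0 := by
    intro h; rw [h] at hCcard; simp at hCcard; omega
  have hdvd_small : ∀ a : ℕ, a ≤ n - 1 → ((a : ZMod n) = 0) → a = 0 := by
    intro a ha h0
    have : (n : ℕ) ∣ a := (ZMod.natCast_eq_zero_iff a n).mp h0
    exact Nat.eq_zero_of_dvd_of_lt this (by omega) |>.symm ▸ rfl
  refine ⟨?_, ?_, ?_⟩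
  · intro h
    have := congrArg Multiset.card h
    simp [hCcard] at this
    omega
  · rw [Multiset.sum_add, Multiset.sum_add, Multiset.sum_replicate, Multiset.sum_replicate, hCsum]
    have : (n-1) • u + (n-1) • w + (u + w) = n • u + n • w := by
      have hh : n = (n-1) + 1 := by omega
      rw [hh, Nat.add_sub_cancel, succ_nsmul, succ_nsmul]
      abel
    rw [this, hord, hord, add_zero]
  · intro T hT hT0 hTS hsum
    obtain ⟨T₁, D, hT₁, hD, rfl⟩ := split_le hT
    obtain ⟨Ta, Tb, hTa, hTb, rfl⟩ := split_le hT₁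
    obtain ⟨ha, hale⟩ := le_replicate_decomp hTa
    obtain ⟨hb, hble⟩ := le_replicate_decomp hTb
    set α := Multiset.card Ta with hαdef
    set γ := Multiset.card Tb with hγdef
    rw [ha, hb] at hsum hTS hT0
    have hsum' : α • u + γ • w + D.sum = 0 := by
      simpa [Multiset.sum_add, Multiset.sum_replicate] using hsum
    -- φ2 applied
    have hDmap : D.map φ2 = Multiset.replicate (Multiset.card D) (1 : ZMod n) := by
      rw [← Multiset.card_map (⇑φ2) D, Multiset.eq_replicate_card]
      intro b hb'
      obtain ⟨c, hc, rfl⟩ := Multiset.mem_map.mp hb'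
      exact h2C c (Multiset.mem_of_le hD hc)
    have hφ2 : ((Multiset.card D : ℕ) : ZMod n) = 0 := by
      have := congrArg φ2 hsum'
      rw [map_add, map_add, map_nsmul, map_nsmul, h2u, h2w, map_zero,
        map_multiset_sum, hDmap, Multiset.sum_replicate, smul_zero, smul_zero,
        zero_add, zero_add, nsmul_eq_mul, mul_one] at this
      exact this
    have hDle : Multiset.card D ≤ n := by
      have := Multiset.card_le_card hD; omega
    have hdvd : (n : ℕ) ∣ Multiset.card D :=
      (ZMod.natCast_eq_zero_iff _ n).mp hφ2
    rcases Nat.lt_or_ge (Multiset.card D) n with hlt | hge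
    · -- card D = 0
      have hD0 : Multiset.card D = 0 := Nat.eq_zero_of_dvd_of_lt hdvd hlt
      have hDz : D = 0 := Multiset.card_eq_zero.mp hD0
      rw [hDz] at hsum'
      simp only [Multiset.sum_zero, add_zero] at hsum'
      have hα0 : (α : ZMod n) = 0 := by
        have := congrArg φ1 hsum'
        rw [map_add, map_nsmul, map_nsmul, h1u, h1w, map_zero, smul_zero, add_zero,
          nsmul_eq_mul, mul_one] at this
        exact this
      have hγ0 : (γ : ZMod n) = 0 := by
        have := congrArg φ3 hsum'
        rw [map_add, map_nsmul, map_nsmul, h3u, h3w, map_zero, smul_zero, zero_add,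
          nsmul_eq_mul, mul_one] at this
        exact this
      have hαz : α = 0 := hdvd_small α hale hα0
      have hγz : γ = 0 := hdvd_small γ hble hγ0
      apply hT0
      rw [hDz, hαz, hγz]
      simp
    · -- card D = n, D = C
      have hDC : D = C := Multiset.eq_of_le_of_card_le hD (by omega)
      rw [hDC, hCsum] at hsum'
      have hsum'' : (α + 1) • u + (γ + 1) • w = 0 := by
        rw [succ_nsmul, succ_nsmul]
        rw [← hsum']; abel
      have hα1 : ((α + 1 : ℕ) : ZMod n) = 0 := by
        have := congrArg φ1 hsum''
        rw [map_add, map_nsmul, map_nsmul, h1u, h1w, map_zero, smul_zero, add_zero,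
          nsmul_eq_mul, mul_one] at this
        exact_mod_cast this
      have hγ1 : ((γ + 1 : ℕ) : ZMod n) = 0 := by
        have := congrArg φ3 hsum''
        rw [map_add, map_nsmul, map_nsmul, h3u, h3w, map_zero, smul_zero, zero_add,
          nsmul_eq_mul, mul_one] at this
        exact_mod_cast this
      have hdα : (n : ℕ) ∣ α + 1 := (ZMod.natCast_eq_zero_iff _ n).mp hα1
      have hdγ : (n : ℕ) ∣ γ + 1 := (ZMod.natCast_eq_zero_iff _ n).mp hγ1
      have hαv : α = n - 1 := by
        have := Nat.le_of_dvd (by omega) hdα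
        omega
      have hγv : γ = n - 1 := by
        have := Nat.le_of_dvd (by omega) hdγ
        omega
      exact hTS (by rw [hDC, hαv, hγv])


lemma chunk_contra {S : Multiset G} (hmin : MinZeroSum S) {i j : ℕ}
    (hij : i < j) (hj : j < S.toList.length)
    (heq : (S.toList.take (i+1)).sum = (S.toList.take (j+1)).sum) : False := by
  obtain ⟨hne, hsum, hminS⟩ := hmin
  set l := S.toList with hl
  set chunk := (l.take (j+1)).drop (i+1) with hchunk
  have hpre : (l.take (j+1)).take (i+1) = l.take (i+1) := by
    rw [List.take_take]
    congr 1
    omega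
  have hdecomp : l.take (i+1) ++ chunk = l.take (j+1) := by
    rw [← hpre]
    exact List.take_append_drop _ _
  have hchsum : chunk.sum = 0 := by
    have := congrArg List.sum hdecomp
    rw [List.sum_append, ← heq] at this
    have h2 := this
    abel_nf at h2
    -- fallback : use add_left_cancel
    have : (l.take (i+1)).sum + chunk.sum = (l.take (i+1)).sum + 0 := by
      rw [add_zero]; exact this
    exact add_left_cancel this
  have hlen : chunk.length = j - i := by
    rw [hchunk, List.length_drop, List.length_take]
    omega
  have hsub : chunk.Sublist l :=
    ((List.drop_suffix _ _).sublist).trans ((List.take_prefix _ _).sublist)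
  have hle : (chunk : Multiset G) ≤ S := by
    rw [← Multiset.coe_toList S]
    exact (Multiset.coe_le).mpr hsub.subperm
  have hne0 : (chunk : Multiset G) ≠ 0 := by
    intro h
    have : chunk.length = 0 := by
      simpa using congrArg Multiset.card h
    omega
  have hneS : (chunk : Multiset G) ≠ S := by
    intro h
    have := congrArg Multiset.card h
    simp only [Multiset.coe_card] at this
    rw [hlen] at this
    have hcard : Multiset.card S = l.length := (Multiset.length_toList S).symm
    omega
  exact hminS _ hle hne0 hneS (by simpa using hchsum)

lemma minZeroSum_card_le [Fintype G] {S : Multiset G} (h : MinZeroSum S) :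
    Multiset.card S ≤ Fintype.card G := by
  by_contra hlt
  push_neg at hlt
  set l := S.toList with hl
  have hlen : l.length = Multiset.card S := Multiset.length_toList S
  let f : Fin (Fintype.card G + 1) → G := fun i => (l.take (i.1+1)).sum
  obtain ⟨i, j, hij, hfe⟩ := Fintype.exists_ne_map_eq_of_card_lt f (by simp)
  have hi : i.1 < l.length := by omega
  have hj : j.1 < l.length := by omega
  rcases Nat.lt_or_ge i.1 j.1 with hlt' | hge
  · exact chunk_contra h hlt' hj hfe
  · have : j.1 < i.1 := by
      rcases Nat.lt_or_ge j.1 i.1 with h' | h'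
      · exact h'
      · exact absurd (Fin.ext (by omega)) hij
    exact chunk_contra h this hi hfe.symm

lemma sum_univ_get {α : Type*} {M : Type*} [AddCommMonoid M] (L : List α) (f : α → M) :
    ∑ j : Fin L.length, f (L.get j) = (L.map f).sum := by
  induction L with
  | nil => simp
  | cons a l ih =>
      rw [List.map_cons, List.sum_cons, ← ih]
      exact Fin.sum_univ_succ (n := l.length) (fun j => f ((a :: l).get j))


def p01 (x : G) : Fin 3 → Multiset G := ![{x}, {-x}, 0]
def p02 (x : G) : Fin 3 → Multiset G := ![{x}, 0, {-x}]
def p12 (x : G) : Fin 3 → Multiset G := ![0, {x}, {-x}]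

def IsPairE (e : Fin 3 → Multiset G) : Prop :=
  ∃ x : G, x ≠ 0 ∧ (e = p01 x ∨ e = p02 x ∨ e = p12 x)

lemma pairE_sum {e : Fin 3 → Multiset G} (h : IsPairE e) :
    ∃ x : G, x ≠ 0 ∧ e 0 + e 1 + e 2 = {x, -x} := by
  obtain ⟨x, hx, h | h | h⟩ := h <;> subst h <;>
    exact ⟨x, hx, by simp [p01, p02, p12, Multiset.insert_eq_cons, Multiset.singleton_add]⟩

lemma tf_pairs (U : Fin 3 → Multiset G) (L : List (Fin 3 → Multiset G))
    (hL : ∀ e ∈ L, IsPairE e)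
    (hU : ∀ i, U i = (L.map (fun e => e i)).sum) :
    TraversalFactorization U L.length 0 := by
  refine ⟨fun j => L.get j 0 + L.get j 1 + L.get j 2, fun j => L.get j, ∅, ?_, fun j => rfl,
    ?_, rfl, by simp, ?_⟩
  · intro j
    obtain ⟨x, hx, he⟩ := pairE_sum (hL (L.get j) (List.get_mem L j))
    show MinZeroSum (L.get j 0 + L.get j 1 + L.get j 2)
    rw [he]
    exact minZeroSum_pair hx
  · intro i
    rw [hU i]
    exact (sum_univ_get L (fun e => e i)).symm
  · intro j _
    obtain ⟨x, hx, he⟩ := pairE_sum (hL (L.get j) (List.get_mem L j))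
    show Multiset.card (L.get j 0 + L.get j 1 + L.get j 2) = 2
    rw [he]
    simp

lemma tf_triple_pairs (U : Fin 3 → Multiset G) (g1 g2 g3 : G)
    (rest : List (Fin 3 → Multiset G))
    (h1 : g1 ≠ 0) (h2 : g2 ≠ 0) (h3 : g3 ≠ 0) (hg : g1 + g2 + g3 = 0)
    (hrest : ∀ e ∈ rest, IsPairE e)
    (hU : ∀ i, U i = (((![{g1}, {g2}, {g3}] : Fin 3 → Multiset G) :: rest).map (fun e => e i)).sum) :
    TraversalFactorization U (rest.length + 1) 1 := by
  set t : Fin 3 → Multiset G := ![{g1}, {g2}, {g3}] with ht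
  set L : List (Fin 3 → Multiset G) := t :: rest with hLdef
  have hlen : L.length = rest.length + 1 := rfl
  refine ⟨fun j => L.get j 0 + L.get j 1 + L.get j 2, fun j => L.get j, {0}, ?_, fun j => rfl,
    ?_, by simp, ?_, ?_⟩
  · intro j
    rcases Fin.eq_zero_or_eq_succ j with rfl | ⟨k, rfl⟩
    · show MinZeroSum (t 0 + t 1 + t 2)
      have : t 0 + t 1 + t 2 = ({g1, g2, g3} : Multiset G) := by
        simp [ht, Multiset.insert_eq_cons, Multiset.singleton_add]
      rw [this]
      exact minZeroSum_triple h1 h2 h3 hg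
    · have hh : L.get k.succ = rest.get ⟨k.1, k.2⟩ := List.get_cons_succ
      have hmem : L.get k.succ ∈ rest := by
        rw [hh]; exact List.get_mem _ _
      obtain ⟨x, hx, he⟩ := pairE_sum (hrest _ hmem)
      show MinZeroSum (L.get k.succ 0 + L.get k.succ 1 + L.get k.succ 2)
      rw [he]
      exact minZeroSum_pair hx
  · intro i
    rw [hU i]
    exact (sum_univ_get L (fun e => e i)).symm
  · intro j hj
    rw [Finset.mem_singleton] at hj
    subst hj
    constructor
    · show Multiset.card (t 0 + t 1 + t 2) = 3
      simp [ht]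
    · intro i
      show Multiset.card (t i) = 1
      fin_cases i <;> simp [ht]
  · intro j hj
    rw [Finset.mem_singleton] at hj
    rcases Fin.eq_zero_or_eq_succ j with rfl | ⟨k, rfl⟩
    · exact absurd rfl hj
    · have hh : L.get k.succ = rest.get ⟨k.1, k.2⟩ := List.get_cons_succ
      have hmem : L.get k.succ ∈ rest := by
        rw [hh]; exact List.get_mem _ _
      obtain ⟨x, hx, he⟩ := pairE_sum (hrest _ hmem)
      show Multiset.card (L.get k.succ 0 + L.get k.succ 1 + L.get k.succ 2) = 2
      rw [he]
      simp


lemma card_finset_sum {ι : Type*} (s : Finset ι) (f : ι → Multiset G) :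
    Multiset.card (∑ i ∈ s, f i) = ∑ i ∈ s, Multiset.card (f i) := by
  classical
  induction s using Finset.induction with
  | empty => simp
  | @insert _ _ h ih => rw [Finset.sum_insert h, Finset.sum_insert h, Multiset.card_add, ih]

lemma rho_ge [Fintype G] {U : Fin 3 → Multiset G} {m r : ℕ}
    (hU : ∀ i, MinZeroSum (U i)) (htf : TraversalFactorization U m r) :
    m ≤ rho G 3 := by
  obtain ⟨W, T, J, hW, hWT, hUT, -, -, -⟩ := htf
  have hsum : (∑ i, U i) = ∑ j, W j := by
    rw [Fin.sum_univ_three, hUT 0, hUT 1, hUT 2, ← Finset.sum_add_distrib,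
      ← Finset.sum_add_distrib]
    exact Finset.sum_congr rfl fun j _ => (hWT j).symm
  have hmem : m ∈ {m : ℕ | ∃ (U : Fin 3 → Multiset G) (V : Fin m → Multiset G),
      (∀ i, MinZeroSum (U i)) ∧ (∀ j, MinZeroSum (V j)) ∧ (∑ i, U i) = (∑ j, V j)} :=
    ⟨U, W, hU, hW, hsum⟩
  have hbdd : BddAbove {m : ℕ | ∃ (U : Fin 3 → Multiset G) (V : Fin m → Multiset G),
      (∀ i, MinZeroSum (U i)) ∧ (∀ j, MinZeroSum (V j)) ∧ (∑ i, U i) = (∑ j, V j)} := by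
    refine ⟨3 * Fintype.card G, fun m' hm' => ?_⟩
    obtain ⟨U', V', hU', hV', hE'⟩ := hm'
    have h1 : ∀ j : Fin m', 1 ≤ Multiset.card (V' j) := by
      intro j
      rw [Nat.one_le_iff_ne_zero, Ne, Multiset.card_eq_zero]
      exact (hV' j).1
    calc m' = ∑ _j : Fin m', 1 := by simp
      _ ≤ ∑ j, Multiset.card (V' j) := Finset.sum_le_sum fun j _ => h1 j
      _ = Multiset.card (∑ j, V' j) := (card_finset_sum _ _).symm
      _ = Multiset.card (∑ i, U' i) := by rw [hE']
      _ = ∑ i, Multiset.card (U' i) := card_finset_sum _ _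
      _ ≤ ∑ _i : Fin 3, Fintype.card G :=
          Finset.sum_le_sum fun i _ => minZeroSum_card_le (hU' i)
      _ = 3 * Fintype.card G := by simp [Finset.sum_const, mul_comm]
  exact le_csSup hbdd hmem


section OddCase

variable (n : ℕ)

-- the vectors
def ve1 : Fin 3 → ZMod n := ![1, 0, 0]
def ve2 : Fin 3 → ZMod n := ![0, 1, 0]
def ve3 : Fin 3 → ZMod n := ![0, 0, 1]
def vc12 : Fin 3 → ZMod n := ![0, 1, 1]
def vc13 : Fin 3 → ZMod n := ![1, 1, 0]
def vc23 : Fin 3 → ZMod n := ![1, 0, -1]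

def vg1 : Fin 3 → ZMod n := ![1 - ((n-1)/2 : ℕ), 1, 1 - ((n-1)/2 : ℕ)]
def vg2 : Fin 3 → ZMod n := ![-((n-1)/2 : ℕ) - 1, ((n-1)/2 : ℕ) + 1, -1]
def vg3 : Fin 3 → ZMod n := ![-1, ((n-1)/2 : ℕ) - 1, -((n-1)/2 : ℕ) - 1]

def evh (i : Fin 3) : (Fin 3 → ZMod n) →+ ZMod n := Pi.evalAddMonoidHom (fun _ => ZMod n) i

def oddRest : List (Fin 3 → Multiset (Fin 3 → ZMod n)) :=
  List.replicate (n-1) (p01 (ve1 n)) ++ List.replicate (n-1) (p02 (ve3 n)) ++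
  List.replicate (n-1) (p12 (ve2 n)) ++ List.replicate ((n-1)/2) (p01 (vc12 n)) ++
  List.replicate ((n-1)/2) (p02 (vc13 n)) ++ List.replicate ((n-1)/2) (p12 (vc23 n))

def oddC1 : Multiset (Fin 3 → ZMod n) :=
  Multiset.replicate ((n-1)/2) (vc12 n) + Multiset.replicate ((n-1)/2) (vc13 n) + {vg1 n}
def oddC2 : Multiset (Fin 3 → ZMod n) :=
  Multiset.replicate ((n-1)/2) (-(vc12 n)) + Multiset.replicate ((n-1)/2) (vc23 n) + {vg2 n}
def oddC3 : Multiset (Fin 3 → ZMod n) :=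
  Multiset.replicate ((n-1)/2) (-(vc13 n)) + Multiset.replicate ((n-1)/2) (-(vc23 n)) + {vg3 n}

def oddU : Fin 3 → Multiset (Fin 3 → ZMod n) :=
  ![Multiset.replicate (n-1) (ve1 n) + Multiset.replicate (n-1) (ve3 n) + oddC1 n,
    Multiset.replicate (n-1) (-(ve1 n)) + Multiset.replicate (n-1) (ve2 n) + oddC2 n,
    Multiset.replicate (n-1) (-(ve3 n)) + Multiset.replicate (n-1) (-(ve2 n)) + oddC3 n]

set_option maxHeartbeats 1000000 in
lemma odd_hU0 :
    Multiset.replicate (n-1) (ve1 n) + Multiset.replicate (n-1) (ve3 n) + oddC1 n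
      = (((![{vg1 n}, {vg2 n}, {vg3 n}] : Fin 3 → Multiset (Fin 3 → ZMod n)) :: oddRest n).map (fun e => e 0)).sum := by
  simp only [oddRest, List.map_cons, List.map_append, List.map_replicate, List.sum_cons,
    List.sum_append, List.sum_replicate, p01, p02, p12, oddC1,
    Matrix.cons_val_zero, Matrix.cons_val_one, Matrix.head_cons, Matrix.cons_val_two,
    Matrix.tail_cons, Multiset.nsmul_singleton, smul_zero, add_zero, zero_add]
  abel

set_option maxHeartbeats 1000000 in
lemma odd_hU1 :
    Multiset.replicate (n-1) (-(ve1 n)) + Multiset.replicate (n-1) (ve2 n) + oddC2 n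
      = (((![{vg1 n}, {vg2 n}, {vg3 n}] : Fin 3 → Multiset (Fin 3 → ZMod n)) :: oddRest n).map (fun e => e 1)).sum := by
  simp only [oddRest, List.map_cons, List.map_append, List.map_replicate, List.sum_cons,
    List.sum_append, List.sum_replicate, p01, p02, p12, oddC2,
    Matrix.cons_val_zero, Matrix.cons_val_one, Matrix.head_cons, Matrix.cons_val_two,
    Matrix.tail_cons, Multiset.nsmul_singleton, smul_zero, add_zero, zero_add]
  abel

set_option maxHeartbeats 1000000 in
lemma odd_hU2 :
    Multiset.replicate (n-1) (-(ve3 n)) + Multiset.replicate (n-1) (-(ve2 n)) + oddC3 n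
      = (((![{vg1 n}, {vg2 n}, {vg3 n}] : Fin 3 → Multiset (Fin 3 → ZMod n)) :: oddRest n).map (fun e => e 2)).sum := by
  simp only [oddRest, List.map_cons, List.map_append, List.map_replicate, List.sum_cons,
    List.sum_append, List.sum_replicate, p01, p02, p12, oddC3,
    Matrix.cons_val_zero, Matrix.cons_val_one, Matrix.head_cons, Matrix.cons_val_two,
    Matrix.tail_cons, Multiset.nsmul_singleton, smul_zero, add_zero, zero_add]
  abel

lemma odd_hz2 (hn : 2 ≤ n) (hodd : n % 2 = 1) :
    (((n-1)/2 : ℕ) : ZMod n) * 2 = -1 := by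
  have h : ((n-1)/2 : ℕ) * 2 = n - 1 := by omega
  have := congrArg (fun a : ℕ => (a : ZMod n)) h
  push_cast at this
  rw [this, Nat.cast_sub (by omega), ZMod.natCast_self, Nat.cast_one, zero_sub]

set_option maxHeartbeats 1000000 in
lemma odd_main (hn : 2 ≤ n) (hodd : n % 2 = 1) :
    (∀ i, MinZeroSum (oddU n i)) ∧
      TraversalFactorization (oddU n) ((3 * n - 2) + (3 * n - 2) / 2) 1 := by
  haveI : NeZero n := ⟨by omega⟩
  haveI : Fact (1 < n) := ⟨by omega⟩
  have hz2 := odd_hz2 n hn hodd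
  have hminU : ∀ i, MinZeroSum (oddU n i) := by
    intro i
    fin_cases i
    · show MinZeroSum (Multiset.replicate (n-1) (ve1 n) + Multiset.replicate (n-1) (ve3 n) + oddC1 n)
      apply minZeroSum_family (n := n) (by omega) _ _ _ (evh n 0) (evh n 1) (evh n 2)
      · simp [evh, ve1]
      · simp [evh, ve3]
      · simp [evh, ve1]
      · simp [evh, ve3]
      · simp [evh, ve1]
      · simp [evh, ve3]
      · intro c hc
        simp only [oddC1, Multiset.mem_add, Multiset.mem_replicate, Multiset.mem_singleton] at hc
        rcases hc with (⟨-, rfl⟩ | ⟨-, rfl⟩) | rfl <;> simp [evh, vc12, vc13, vg1]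
      · show (oddC1 n).sum = ve1 n + ve3 n
        simp only [oddC1, Multiset.sum_add, Multiset.sum_replicate, Multiset.sum_singleton]
        funext i
        fin_cases i <;>
          simp [vc12, vc13, vg1, ve1, ve3, nsmul_eq_mul] <;>
          first
          | ring1
          | linear_combination hz2
          | linear_combination -hz2
          | linear_combination 2*hz2
          | linear_combination -2*hz2
          | linear_combination 3*hz2
          | linear_combination -3*hz2
          | linear_combination 4*hz2
          | linear_combination -4*hz2
      · simp only [oddC1, Multiset.card_add, Multiset.card_replicate, Multiset.card_singleton]
        omega
      · intro g h0 h1 h2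
        simp only [evh, Pi.evalAddMonoidHom_apply] at h0 h1 h2
        funext i; fin_cases i <;> assumption
    · show MinZeroSum (Multiset.replicate (n-1) (-(ve1 n)) + Multiset.replicate (n-1) (ve2 n) + oddC2 n)
      apply minZeroSum_family (n := n) (by omega) _ _ _ (-(evh n 0)) (-(evh n 2)) (evh n 1)
      · simp [evh, ve1]
      · simp [evh, ve2]
      · simp [evh, ve1]
      · simp [evh, ve2]
      · simp [evh, ve1]
      · simp [evh, ve2]
      · intro c hc
        simp only [oddC2, Multiset.mem_add, Multiset.mem_replicate, Multiset.mem_singleton] at hc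
        rcases hc with (⟨-, rfl⟩ | ⟨-, rfl⟩) | rfl <;> simp [evh, vc12, vc23, vg2]
      · show (oddC2 n).sum = -(ve1 n) + ve2 n
        simp only [oddC2, Multiset.sum_add, Multiset.sum_replicate, Multiset.sum_singleton]
        funext i
        fin_cases i <;>
          simp [vc12, vc23, vg2, ve1, ve2, nsmul_eq_mul] <;>
          first
          | ring1
          | linear_combination hz2
          | linear_combination -hz2
          | linear_combination 2*hz2
          | linear_combination -2*hz2
          | linear_combination 3*hz2
          | linear_combination -3*hz2
          | linear_combination 4*hz2
          | linear_combination -4*hz2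
      · simp only [oddC2, Multiset.card_add, Multiset.card_replicate, Multiset.card_singleton]
        omega
      · intro g h0 h1 h2
        simp only [AddMonoidHom.neg_apply, evh, Pi.evalAddMonoidHom_apply, neg_eq_zero] at h0 h1 h2
        funext i; fin_cases i <;> assumption
    · show MinZeroSum (Multiset.replicate (n-1) (-(ve3 n)) + Multiset.replicate (n-1) (-(ve2 n)) + oddC3 n)
      apply minZeroSum_family (n := n) (by omega) _ _ _ (-(evh n 2)) (-(evh n 0)) (-(evh n 1))
      · simp [evh, ve3]
      · simp [evh, ve2]
      · simp [evh, ve3]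
      · simp [evh, ve2]
      · simp [evh, ve3]
      · simp [evh, ve2]
      · intro c hc
        simp only [oddC3, Multiset.mem_add, Multiset.mem_replicate, Multiset.mem_singleton] at hc
        rcases hc with (⟨-, rfl⟩ | ⟨-, rfl⟩) | rfl <;> simp [evh, vc13, vc23, vg3]
      · show (oddC3 n).sum = -(ve3 n) + -(ve2 n)
        simp only [oddC3, Multiset.sum_add, Multiset.sum_replicate, Multiset.sum_singleton]
        funext i
        fin_cases i <;>
          simp [vc13, vc23, vg3, ve2, ve3, nsmul_eq_mul] <;>
          first
          | ring1
          | linear_combination hz2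
          | linear_combination -hz2
          | linear_combination 2*hz2
          | linear_combination -2*hz2
          | linear_combination 3*hz2
          | linear_combination -3*hz2
          | linear_combination 4*hz2
          | linear_combination -4*hz2
      · simp only [oddC3, Multiset.card_add, Multiset.card_replicate, Multiset.card_singleton]
        omega
      · intro g h0 h1 h2
        simp only [AddMonoidHom.neg_apply, evh, Pi.evalAddMonoidHom_apply, neg_eq_zero] at h0 h1 h2
        funext i; fin_cases i <;> assumption
  refine ⟨hminU, ?_⟩
  have hnum : (3 * n - 2) + (3 * n - 2) / 2 = (oddRest n).length + 1 := by
    simp only [oddRest, List.length_append, List.length_replicate]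
    omega
  rw [hnum]
  apply tf_triple_pairs (oddU n) (vg1 n) (vg2 n) (vg3 n) (oddRest n)
  · intro h
    have := congrFun h 1
    simp [vg1] at this
  · intro h
    have := congrFun h 2
    simp [vg2] at this
  · intro h
    have := congrFun h 0
    simp [vg3] at this
  · funext i
    fin_cases i <;> simp [vg1, vg2, vg3] <;> first
          | ring1
          | linear_combination hz2
          | linear_combination -hz2
          | linear_combination 2*hz2
          | linear_combination -2*hz2
          | linear_combination 3*hz2
          | linear_combination -3*hz2
          | linear_combination 4*hz2
          | linear_combination -4*hz2
  · intro e he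
    simp only [oddRest, List.mem_append, List.mem_replicate] at he
    have hne : ∀ (a b c : ZMod n), a = 1 → (![a, b, c] : Fin 3 → ZMod n) ≠ 0 := by
      intro a b c ha h
      have := congrFun h 0
      simp [ha] at this
    rcases he with ((((⟨-, rfl⟩ | ⟨-, rfl⟩) | ⟨-, rfl⟩) | ⟨-, rfl⟩) | ⟨-, rfl⟩) | ⟨-, rfl⟩
    · exact ⟨ve1 n, hne 1 0 0 rfl, Or.inl rfl⟩
    · exact ⟨ve3 n, by
        intro h
        have := congrFun h 2
        simp [ve3] at this, Or.inr (Or.inl rfl)⟩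
    · exact ⟨ve2 n, by
        intro h
        have := congrFun h 1
        simp [ve2] at this, Or.inr (Or.inr rfl)⟩
    · exact ⟨vc12 n, by
        intro h
        have := congrFun h 1
        simp [vc12] at this, Or.inl rfl⟩
    · exact ⟨vc13 n, hne 1 1 0 rfl, Or.inr (Or.inl rfl)⟩
    · exact ⟨vc23 n, hne 1 0 (-1) rfl, Or.inr (Or.inr rfl)⟩
  · intro i
    fin_cases i
    · exact odd_hU0 n
    · exact odd_hU1 n
    · exact odd_hU2 n

end OddCase

section EvenCase

variable (n : ℕ)


def vd12 : Fin 3 → ZMod n := ![(n/2 : ℕ) + 1, 1, 1]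
def vd13 : Fin 3 → ZMod n := ![1, 1, (n/2 : ℕ) + 1]
def vd23 : Fin 3 → ZMod n := ![1, (n/2 : ℕ) + 1, -1]


def evenRest : List (Fin 3 → Multiset (Fin 3 → ZMod n)) :=
  List.replicate (n-1) (p01 (ve1 n)) ++ List.replicate (n-1) (p02 (ve3 n)) ++
  List.replicate (n-1) (p12 (ve2 n)) ++
  (List.replicate (n/2-1) (p01 (vc12 n)) ++ [p01 (vd12 n)]) ++
  (List.replicate (n/2-1) (p02 (vc13 n)) ++ [p02 (vd13 n)]) ++
  (List.replicate (n/2-1) (p12 (vc23 n)) ++ [p12 (vd23 n)])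

def evenC1 : Multiset (Fin 3 → ZMod n) :=
  (Multiset.replicate (n/2-1) (vc12 n) + {vd12 n}) +
  (Multiset.replicate (n/2-1) (vc13 n) + {vd13 n})
def evenC2 : Multiset (Fin 3 → ZMod n) :=
  (Multiset.replicate (n/2-1) (-(vc12 n)) + {-(vd12 n)}) +
  (Multiset.replicate (n/2-1) (vc23 n) + {vd23 n})
def evenC3 : Multiset (Fin 3 → ZMod n) :=
  (Multiset.replicate (n/2-1) (-(vc13 n)) + {-(vd13 n)}) +
  (Multiset.replicate (n/2-1) (-(vc23 n)) + {-(vd23 n)})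

def evenU : Fin 3 → Multiset (Fin 3 → ZMod n) :=
  ![Multiset.replicate (n-1) (ve1 n) + Multiset.replicate (n-1) (ve3 n) + evenC1 n,
    Multiset.replicate (n-1) (-(ve1 n)) + Multiset.replicate (n-1) (ve2 n) + evenC2 n,
    Multiset.replicate (n-1) (-(ve3 n)) + Multiset.replicate (n-1) (-(ve2 n)) + evenC3 n]

lemma even_hy (hn : 2 ≤ n) (heven : n % 2 = 0) :
    ((n/2 : ℕ) : ZMod n) * 2 = 0 := by
  have h : (n/2 : ℕ) * 2 = n := by omega
  have := congrArg (fun a : ℕ => (a : ZMod n)) h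
  push_cast at this
  rw [this, ZMod.natCast_self]

set_option maxHeartbeats 1000000 in
lemma even_hU0 :
    Multiset.replicate (n-1) (ve1 n) + Multiset.replicate (n-1) (ve3 n) + evenC1 n
      = ((evenRest n).map (fun e => e 0)).sum := by
  simp only [evenRest, List.map_append, List.map_replicate, List.map_cons, List.map_nil,
    List.sum_append, List.sum_replicate, List.sum_cons, List.sum_nil, p01, p02, p12, evenC1,
    Matrix.cons_val_zero, Matrix.cons_val_one, Matrix.head_cons, Matrix.cons_val_two,
    Matrix.tail_cons, Multiset.nsmul_singleton, smul_zero, add_zero, zero_add]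
  abel

set_option maxHeartbeats 1000000 in
lemma even_hU1 :
    Multiset.replicate (n-1) (-(ve1 n)) + Multiset.replicate (n-1) (ve2 n) + evenC2 n
      = ((evenRest n).map (fun e => e 1)).sum := by
  simp only [evenRest, List.map_append, List.map_replicate, List.map_cons, List.map_nil,
    List.sum_append, List.sum_replicate, List.sum_cons, List.sum_nil, p01, p02, p12, evenC2,
    Matrix.cons_val_zero, Matrix.cons_val_one, Matrix.head_cons, Matrix.cons_val_two,
    Matrix.tail_cons, Multiset.nsmul_singleton, smul_zero, add_zero, zero_add]
  abel

set_option maxHeartbeats 1000000 in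
lemma even_hU2 :
    Multiset.replicate (n-1) (-(ve3 n)) + Multiset.replicate (n-1) (-(ve2 n)) + evenC3 n
      = ((evenRest n).map (fun e => e 2)).sum := by
  simp only [evenRest, List.map_append, List.map_replicate, List.map_cons, List.map_nil,
    List.sum_append, List.sum_replicate, List.sum_cons, List.sum_nil, p01, p02, p12, evenC3,
    Matrix.cons_val_zero, Matrix.cons_val_one, Matrix.head_cons, Matrix.cons_val_two,
    Matrix.tail_cons, Multiset.nsmul_singleton, smul_zero, add_zero, zero_add]
  abel

set_option maxHeartbeats 1000000 in
lemma even_main (hn : 2 ≤ n) (heven : n % 2 = 0) :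
    (∀ i, MinZeroSum (evenU n i)) ∧
      TraversalFactorization (evenU n) ((3 * n - 2) + (3 * n - 2) / 2) 0 := by
  haveI : NeZero n := ⟨by omega⟩
  haveI : Fact (1 < n) := ⟨by omega⟩
  have hy := even_hy n hn heven
  have hminU : ∀ i, MinZeroSum (evenU n i) := by
    intro i
    fin_cases i
    · show MinZeroSum (Multiset.replicate (n-1) (ve1 n) + Multiset.replicate (n-1) (ve3 n) + evenC1 n)
      apply minZeroSum_family (n := n) (by omega) _ _ _ (evh n 0) (evh n 1) (evh n 2)
      · simp [evh, ve1]
      · simp [evh, ve3]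
      · simp [evh, ve1]
      · simp [evh, ve3]
      · simp [evh, ve1]
      · simp [evh, ve3]
      · intro c hc
        simp only [evenC1, Multiset.mem_add, Multiset.mem_replicate, Multiset.mem_singleton] at hc
        rcases hc with (⟨-, rfl⟩ | rfl) | (⟨-, rfl⟩ | rfl) <;> simp [evh, vc12, vc13, vd12, vd13]
      · show (evenC1 n).sum = ve1 n + ve3 n
        simp only [evenC1, Multiset.sum_add, Multiset.sum_replicate, Multiset.sum_singleton]
        funext i
        fin_cases i <;>
          simp [vc12, vc13, vd12, vd13, ve1, ve3, nsmul_eq_mul, Nat.cast_sub (show 1 ≤ n/2 by omega)] <;>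
          first
          | ring1
          | linear_combination hy
          | linear_combination -hy
          | linear_combination 2*hy
          | linear_combination -2*hy
      · simp only [evenC1, Multiset.card_add, Multiset.card_replicate, Multiset.card_singleton]
        omega
      · intro g h0 h1 h2
        simp only [evh, Pi.evalAddMonoidHom_apply] at h0 h1 h2
        funext i; fin_cases i <;> assumption
    · show MinZeroSum (Multiset.replicate (n-1) (-(ve1 n)) + Multiset.replicate (n-1) (ve2 n) + evenC2 n)
      apply minZeroSum_family (n := n) (by omega) _ _ _ (-(evh n 0)) (-(evh n 2)) (evh n 1)
      · simp [evh, ve1]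
      · simp [evh, ve2]
      · simp [evh, ve1]
      · simp [evh, ve2]
      · simp [evh, ve1]
      · simp [evh, ve2]
      · intro c hc
        simp only [evenC2, Multiset.mem_add, Multiset.mem_replicate, Multiset.mem_singleton] at hc
        rcases hc with (⟨-, rfl⟩ | rfl) | (⟨-, rfl⟩ | rfl) <;> simp [evh, vc12, vc23, vd12, vd23]
      · show (evenC2 n).sum = -(ve1 n) + ve2 n
        simp only [evenC2, Multiset.sum_add, Multiset.sum_replicate, Multiset.sum_singleton]
        funext i
        fin_cases i <;>
          simp [vc12, vc23, vd12, vd23, ve1, ve2, nsmul_eq_mul, Nat.cast_sub (show 1 ≤ n/2 by omega)] <;>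
          first
          | ring1
          | linear_combination hy
          | linear_combination -hy
          | linear_combination 2*hy
          | linear_combination -2*hy
      · simp only [evenC2, Multiset.card_add, Multiset.card_replicate, Multiset.card_singleton]
        omega
      · intro g h0 h1 h2
        simp only [AddMonoidHom.neg_apply, evh, Pi.evalAddMonoidHom_apply, neg_eq_zero] at h0 h1 h2
        funext i; fin_cases i <;> assumption
    · show MinZeroSum (Multiset.replicate (n-1) (-(ve3 n)) + Multiset.replicate (n-1) (-(ve2 n)) + evenC3 n)
      apply minZeroSum_family (n := n) (by omega) _ _ _ (-(evh n 2)) (-(evh n 0)) (-(evh n 1))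
      · simp [evh, ve3]
      · simp [evh, ve2]
      · simp [evh, ve3]
      · simp [evh, ve2]
      · simp [evh, ve3]
      · simp [evh, ve2]
      · intro c hc
        simp only [evenC3, Multiset.mem_add, Multiset.mem_replicate, Multiset.mem_singleton] at hc
        rcases hc with (⟨-, rfl⟩ | rfl) | (⟨-, rfl⟩ | rfl) <;> simp [evh, vc13, vc23, vd13, vd23]
      · show (evenC3 n).sum = -(ve3 n) + -(ve2 n)
        simp only [evenC3, Multiset.sum_add, Multiset.sum_replicate, Multiset.sum_singleton]
        funext i
        fin_cases i <;>
          simp [vc13, vc23, vd13, vd23, ve2, ve3, nsmul_eq_mul, Nat.cast_sub (show 1 ≤ n/2 by omega)] <;>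
          first
          | ring1
          | linear_combination hy
          | linear_combination -hy
          | linear_combination 2*hy
          | linear_combination -2*hy
      · simp only [evenC3, Multiset.card_add, Multiset.card_replicate, Multiset.card_singleton]
        omega
      · intro g h0 h1 h2
        simp only [AddMonoidHom.neg_apply, evh, Pi.evalAddMonoidHom_apply, neg_eq_zero] at h0 h1 h2
        funext i; fin_cases i <;> assumption
  refine ⟨hminU, ?_⟩
  have hnum : (3 * n - 2) + (3 * n - 2) / 2 = (evenRest n).length := by
    simp only [evenRest, List.length_append, List.length_replicate, List.length_cons,
      List.length_nil]
    omega
  rw [hnum]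
  apply tf_pairs (evenU n) (evenRest n)
  · intro e he
    have hne1 : ∀ (a b c : ZMod n), b = 1 → (![a, b, c] : Fin 3 → ZMod n) ≠ 0 := by
      intro a b c hb h
      have := congrFun h 1
      simp [hb] at this
    have hne0 : ∀ (a b c : ZMod n), a = 1 → (![a, b, c] : Fin 3 → ZMod n) ≠ 0 := by
      intro a b c ha h
      have := congrFun h 0
      simp [ha] at this
    have hne2 : ∀ (a b c : ZMod n), c = 1 → (![a, b, c] : Fin 3 → ZMod n) ≠ 0 := by
      intro a b c hc h
      have := congrFun h 2
      simp [hc] at this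
    simp only [evenRest, List.mem_append, List.mem_replicate, List.mem_singleton] at he
    rcases he with ((((⟨-, rfl⟩ | ⟨-, rfl⟩) | ⟨-, rfl⟩) | (⟨-, rfl⟩ | rfl)) | (⟨-, rfl⟩ | rfl)) | (⟨-, rfl⟩ | rfl)
    · exact ⟨ve1 n, hne0 1 0 0 rfl, Or.inl rfl⟩
    · exact ⟨ve3 n, hne2 0 0 1 rfl, Or.inr (Or.inl rfl)⟩
    · exact ⟨ve2 n, hne1 0 1 0 rfl, Or.inr (Or.inr rfl)⟩
    · exact ⟨vc12 n, hne1 0 1 1 rfl, Or.inl rfl⟩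
    · exact ⟨vd12 n, hne1 _ 1 1 rfl, Or.inl rfl⟩
    · exact ⟨vc13 n, hne0 1 1 0 rfl, Or.inr (Or.inl rfl)⟩
    · exact ⟨vd13 n, hne0 1 1 _ rfl, Or.inr (Or.inl rfl)⟩
    · exact ⟨vc23 n, hne0 1 0 (-1) rfl, Or.inr (Or.inr rfl)⟩
    · exact ⟨vd23 n, hne0 1 _ (-1) rfl, Or.inr (Or.inr rfl)⟩
  · intro i
    fin_cases i
    · exact even_hU0 n
    · exact even_hU1 n
    · exact even_hU2 n

end EvenCase

end Stmt16Aux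

theorem stmt16 (n : ℕ) (hn : 2 ≤ n) :
    (∃ U : Fin 3 → Multiset (Fin 3 → ZMod n), (∀ i, MinZeroSum (U i)) ∧
      ((Odd n → TraversalFactorization U ((3 * n - 2) + (3 * n - 2) / 2) 1) ∧
       (Even n → TraversalFactorization U ((3 * n - 2) + (3 * n - 2) / 2) 0))) ∧
    (3 * n - 2) + (3 * n - 2) / 2 ≤ rho (Fin 3 → ZMod n) 3 := by
  haveI : NeZero n := ⟨by omega⟩
  rcases Nat.even_or_odd n with he | ho
  · have heven : n % 2 = 0 := Nat.even_iff.mp he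
    obtain ⟨hmin, htf⟩ := Stmt16Aux.even_main n hn heven
    refine ⟨⟨Stmt16Aux.evenU n, hmin, ?_, fun _ => htf⟩, Stmt16Aux.rho_ge hmin htf⟩
    intro hod
    exact absurd (Nat.odd_iff.mp hod) (by omega)
  · have hodd : n % 2 = 1 := Nat.odd_iff.mp ho
    obtain ⟨hmin, htf⟩ := Stmt16Aux.odd_main n hn hodd
    refine ⟨⟨Stmt16Aux.oddU n, hmin, fun _ => htf, ?_⟩, Stmt16Aux.rho_ge hmin htf⟩
    intro hev
    exact absurd (Nat.even_iff.mp hev) (by omega)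
end
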